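/- arXiv:1106.0874 — 6 statements merged into one kernel-verified Lean document; each statement's English description precedes it below -/
import Mathlib

section
/- A finite family of 2-state characters on a finite set of taxa has a perfect phylogeny if and only if every two characters of the family have a perfect phylogeny. -/
/-- A perfect phylogeny for a family of `k`-state characters `chars` (indexed by `F`)
on a finite set of taxa `X`: a finite tree `T` with a labeling `ℓ` of its vertices by
full state-assignments, such that every taxon's state-assignment occurs at some vertex,
and for each character and state the vertices carrying that state induce a connected
subgraph of `T`. -/
def PerfectPhylogeny {X F : Type} [Fintype X] [Fintype F] (k : ℕ)
    (chars : F → X → Fin k) : Prop :=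
  ∃ (V : Type) (_ : Fintype V) (T : SimpleGraph V) (ℓ : V → F → Fin k),
    T.IsTree ∧
    (∀ x : X, ∃ v : V, ∀ f : F, ℓ v f = chars f x) ∧
    ∀ (f : F) (s : Fin k), (T.induce {v : V | ℓ v f = s}).Preconnected

/-- Two characters `a, b` have a perfect phylogeny (as a two-member family). -/
def PairPP {X : Type} [Fintype X] (k : ℕ) (a b : X → Fin k) : Prop :=
  PerfectPhylogeny k ![a, b]

/-- The subfamily of `chars` indexed by the finite set `S` has a perfect phylogeny. -/
def SubPP {X F : Type} [Fintype X] [Fintype F] (k : ℕ) (chars : F → X → Fin k)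
    (S : Finset F) : Prop :=
  PerfectPhylogeny k (fun f : {x // x ∈ S} => chars f.1)

/-- A family of characters is pairwise compatible if every two of its characters
have a perfect phylogeny. -/
def PairwiseCompatible {X F : Type} [Fintype X] [Fintype F] (k : ℕ)
    (chars : F → X → Fin k) : Prop :=
  ∀ a b : F, a ≠ b → PairPP k (chars a) (chars b)

/-- The partition intersection graph of two characters `a, b`.  The vertex `(false, i)`
represents state `i` of `a` and `(true, j)` represents state `j` of `b`; there is an
edge between `(false, i)` and `(true, j)` exactly when some taxon has state `i` for `a`
and state `j` for `b`, and no edges between vertices of the same character. -/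
def pig {X : Type} {k : ℕ} (a b : X → Fin k) : SimpleGraph (Bool × Fin k) where
  Adj u v :=
    (u.1 = false ∧ v.1 = true ∧ ∃ x, a x = u.2 ∧ b x = v.2) ∨
    (u.1 = true ∧ v.1 = false ∧ ∃ x, a x = v.2 ∧ b x = u.2)
  symm := by
    constructor
    rintro ⟨ub, us⟩ ⟨vb, vs⟩ (⟨h1, h2, x, hx⟩ | ⟨h1, h2, x, hx⟩) <;>
      subst h1 <;> subst h2
    · exact Or.inr ⟨rfl, rfl, x, hx⟩
    · exact Or.inl ⟨rfl, rfl, x, hx⟩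
  loopless := by
    constructor
    rintro ⟨ub, us⟩ (⟨h1, h2, -⟩ | ⟨h1, h2, -⟩) <;> simp_all

/-- The binarized character `c(i)` of a 3-state character `c`: state `0` on taxa
where `c` has state `i`, and state `1` elsewhere. -/
def bin {X : Type} (c : X → Fin 3) (i : Fin 3) : X → Fin 2 :=
  fun x => if c x = i then 0 else 1

/-- State `i` of character `c` (of the family `chars`) is dependent: some character `d`
has two distinct states `j, k` such that `c(i)` is incompatible with both `d(j)` and `d(k)`. -/
def DependentState {X F : Type} [Fintype X] [Fintype F] (chars : F → X → Fin 3)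
    (c : F) (i : Fin 3) : Prop :=
  ∃ (d : F) (j k : Fin 3), j ≠ k ∧
    ¬ PairPP 2 (bin (chars c) i) (bin (chars d) j) ∧
    ¬ PairPP 2 (bin (chars c) i) (bin (chars d) k)

/-- `d` is a witness that state `i` of `c` is dependent. -/
def WitnessOf {X F : Type} [Fintype X] [Fintype F] (chars : F → X → Fin 3)
    (c : F) (i : Fin 3) (d : F) : Prop :=
  ∃ j k : Fin 3, j ≠ k ∧
    ¬ PairPP 2 (bin (chars c) i) (bin (chars d) j) ∧
    ¬ PairPP 2 (bin (chars c) i) (bin (chars d) k)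

/-- The graph `G` contains a path of length four (five pairwise distinct vertices,
four edges) whose middle vertex is `m`. -/
def HasPathLen4Mid {V : Type} (G : SimpleGraph V) (m : V) : Prop :=
  ∃ p : Fin 5 → V, Function.Injective p ∧
    (∀ t : Fin 4, G.Adj (p t.castSucc) (p t.succ)) ∧ p 2 = m

/-- Some taxon realizes the pair of states `(i, j)` for the pair of characters `(u, v)`. -/
def realizes {X : Type} (u v : X → Fin 3) (i j : Fin 3) : Prop :=
  ∃ t, u t = i ∧ v t = j

private def valHom {V : Type} (G : SimpleGraph V) (S : Set V) : G.induce S →g G :=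
  ⟨Subtype.val, fun h => h⟩

private lemma exists_walk_in_set {V : Type} {T : SimpleGraph V} {S : Set V}
    (hS : (T.induce S).Preconnected) {u v : V} (hu : u ∈ S) (hv : v ∈ S) :
    ∃ w : T.Walk u v, ∀ x ∈ w.support, x ∈ S := by
  obtain ⟨w⟩ := hS ⟨u, hu⟩ ⟨v, hv⟩
  refine ⟨w.map (valHom T S), ?_⟩
  intro x hx
  have hx2 : x ∈ (w.map (valHom T S)).support := hx
  rw [SimpleGraph.Walk.support_map, List.mem_map] at hx2
  obtain ⟨a, _, rfl⟩ := hx2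
  exact a.2

private lemma cross_unique {V : Type} {T : SimpleGraph V} (hac : T.IsAcyclic)
    {S : Set V} (hS : (T.induce S).Preconnected) (hSc : (T.induce Sᶜ).Preconnected)
    {x x' y y' : V} (hx : x ∈ S) (hx' : x' ∈ S) (hy : y ∉ S) (hy' : y' ∉ S)
    (hxy : T.Adj x y) (hx'y' : T.Adj x' y') : x = x' ∧ y = y' := by
  classical
  -- path q from x to x' inside S
  obtain ⟨w, hw⟩ := exists_walk_in_set hS hx hx'
  set q := w.bypass with hqdef
  have hq : q.IsPath := w.bypass_isPath
  have hqS : ∀ z ∈ q.support, z ∈ S := fun z hz => hw z (w.support_bypass_subset hz)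
  -- P2 : path from x to y' through S then the edge x'–y'
  have hy'q : y' ∉ q.support := fun h => hy' (hqS _ h)
  set P2 : T.Walk x y' := q.append (SimpleGraph.Walk.cons hx'y' SimpleGraph.Walk.nil) with hP2def
  have hP2 : P2.IsPath := by
    rw [SimpleGraph.Walk.isPath_def, hP2def, SimpleGraph.Walk.support_append]
    simp only [SimpleGraph.Walk.support_cons, SimpleGraph.Walk.support_nil]
    simp only [List.tail_cons]
    rw [List.nodup_append]
    refine ⟨hq.support_nodup, List.nodup_singleton _, ?_⟩
    intro a ha b hb
    rw [List.mem_singleton] at hb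
    subst hb
    rintro rfl
    exact hy'q ha
  have hP2supp : ∀ z ∈ P2.support, z ∈ S ∪ {y'} := by
    intro z hz
    rw [hP2def, SimpleGraph.Walk.mem_support_append_iff] at hz
    rcases hz with hz | hz
    · exact Or.inl (hqS _ hz)
    · simp only [SimpleGraph.Walk.support_cons, SimpleGraph.Walk.support_nil,
        List.mem_cons, List.mem_singleton, List.not_mem_nil, or_false] at hz
      rcases hz with rfl | rfl
      · exact Or.inl (hqS _ q.end_mem_support)
      · exact Or.inr rfl
  have hyy' : y = y' := by
    by_contra hne
    -- path p from y to y' inside Sᶜ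
    obtain ⟨w', hw'⟩ := exists_walk_in_set hSc hy hy'
    set p := w'.bypass with hpdef
    have hp : p.IsPath := w'.bypass_isPath
    have hpSc : ∀ z ∈ p.support, z ∉ S := fun z hz => hw' z (w'.support_bypass_subset hz)
    have hxp : x ∉ p.support := fun h => (hpSc x h) hx
    have hP1 : (SimpleGraph.Walk.cons hxy p).IsPath := hp.cons hxp
    have hpq := hac.path_unique ⟨SimpleGraph.Walk.cons hxy p, hP1⟩ ⟨P2, hP2⟩
    have hsupp : y ∈ P2.support := by
      have hmem : y ∈ (SimpleGraph.Walk.cons hxy p).support := by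
        rw [SimpleGraph.Walk.support_cons]
        exact List.mem_cons_of_mem _ p.start_mem_support
      have hval : SimpleGraph.Walk.cons hxy p = P2 := congrArg Subtype.val hpq
      rwa [hval] at hmem
    rcases hP2supp y hsupp with h | h
    · exact hy h
    · exact hne h
  subst hyy'
  refine ⟨?_, rfl⟩
  have hP1 : (SimpleGraph.Walk.cons hxy SimpleGraph.Walk.nil).IsPath :=
    SimpleGraph.Walk.IsPath.nil.cons (by simp [SimpleGraph.Walk.support_nil]; exact fun h => hy (h ▸ hx))
  have heq := hac.path_unique ⟨SimpleGraph.Walk.cons hxy SimpleGraph.Walk.nil, hP1⟩ ⟨P2, hP2⟩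
  have hx'mem : x' ∈ P2.support := by
    rw [hP2def, SimpleGraph.Walk.mem_support_append_iff]
    exact Or.inl q.end_mem_support
  have : x' ∈ (SimpleGraph.Walk.cons hxy SimpleGraph.Walk.nil).support := by
    have hval : P2 = SimpleGraph.Walk.cons hxy SimpleGraph.Walk.nil := by
      exact congrArg Subtype.val heq.symm
    rwa [hval] at hx'mem
  simp only [SimpleGraph.Walk.support_cons, SimpleGraph.Walk.support_nil,
    List.mem_cons, List.mem_singleton, List.not_mem_nil, or_false] at this
  rcases this with rfl | rfl
  · rfl
  · exact absurd hx' hy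

private lemma pairPP_fourGamete {X : Type} [Fintype X] {a b : X → Fin 2}
    (h : PairPP 2 a b) (hall : ∀ s t : Fin 2, ∃ x, a x = s ∧ b x = t) : False := by
  obtain ⟨V, fV, T, ℓ, htree, htax, hconv⟩ := h
  have vert : ∀ s t : Fin 2, ∃ v : V, ℓ v 0 = s ∧ ℓ v 1 = t := by
    intro s t
    obtain ⟨x, hx1, hx2⟩ := hall s t
    obtain ⟨v, hv⟩ := htax x
    refine ⟨v, ?_, ?_⟩
    · rw [hv 0]; simpa using hx1
    · rw [hv 1]; simpa using hx2
  obtain ⟨v00, hv00a, hv00b⟩ := vert 0 0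
  obtain ⟨v01, hv01a, hv01b⟩ := vert 0 1
  obtain ⟨v10, hv10a, hv10b⟩ := vert 1 0
  obtain ⟨v11, hv11a, hv11b⟩ := vert 1 1
  set S : Set V := {v | ℓ v 0 = 0} with hSdef
  have hScEq : Sᶜ = {v : V | ℓ v 0 = 1} := by
    ext v
    simp only [hSdef, Set.mem_compl_iff, Set.mem_setOf_eq]
    omega
  have hS : (T.induce S).Preconnected := hconv 0 0
  have hSc : (T.induce Sᶜ).Preconnected := by rw [hScEq]; exact hconv 0 1
  -- walk from v00 to v10 inside b-class 0
  obtain ⟨w0, hw0⟩ := exists_walk_in_set (hconv 1 0) (u := v00) (v := v10) hv00b hv10b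
  obtain ⟨w1, hw1⟩ := exists_walk_in_set (hconv 1 1) (u := v01) (v := v11) hv01b hv11b
  obtain ⟨d0, hd0mem, hd0f, hd0s⟩ := w0.exists_boundary_dart S hv00a (by
    simp only [hSdef, Set.mem_setOf_eq]; omega)
  obtain ⟨d1, hd1mem, hd1f, hd1s⟩ := w1.exists_boundary_dart S hv01a (by
    simp only [hSdef, Set.mem_setOf_eq]; omega)
  obtain ⟨heq, -⟩ := cross_unique htree.IsAcyclic hS hSc hd0f hd1f hd0s hd1s d0.adj d1.adj
  have h0 : d0.fst ∈ {v : V | ℓ v 1 = 0} := hw0 _ (w0.dart_fst_mem_support_of_mem_darts hd0mem)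
  have h1 : d1.fst ∈ {v : V | ℓ v 1 = 1} := hw1 _ (w1.dart_fst_mem_support_of_mem_darts hd1mem)
  rw [heq] at h0
  simp only [Set.mem_setOf_eq] at h0 h1
  omega

private lemma backward {X F : Type} [Fintype X] [Fintype F] (chars : F → X → Fin 2)
    (h : ∀ a b : F, a ≠ b → PairPP 2 (chars a) (chars b)) : PerfectPhylogeny 2 chars := by
  classical
  rcases isEmpty_or_nonempty X with hXe | hXn
  · refine ⟨PUnit, inferInstance, ⊥, fun _ _ => 0, ⟨?_, SimpleGraph.isAcyclic_bot⟩, ?_, ?_⟩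
    · refine SimpleGraph.Connected.mk (fun u v => ?_)
      obtain rfl := Subsingleton.elim u v
      exact SimpleGraph.Reachable.refl u
    · exact fun x => (hXe.false x).elim
    · intro f s u v
      obtain rfl := Subsingleton.elim u v
      exact SimpleGraph.Reachable.refl u
  obtain ⟨x0⟩ := hXn
  let B : F → Finset X := fun f => Finset.univ.filter fun x => chars f x ≠ chars f x0
  have hmemB : ∀ f x, x ∈ B f ↔ chars f x ≠ chars f x0 := by
    intro f x; simp [B]
  have hx0B : ∀ f, x0 ∉ B f := by
    intro f hx; exact ((hmemB f x0).1 hx) rfl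
  -- laminarity
  have lam : ∀ f g, B f ⊆ B g ∨ B g ⊆ B f ∨ (∀ x, x ∈ B f → x ∉ B g) := by
    intro f g
    by_cases hfg : f = g
    · subst hfg; exact Or.inl subset_rfl
    by_contra hcon
    push_neg at hcon
    obtain ⟨hnfg, hngf, x3, hx3f, hx3g⟩ := hcon
    rw [Finset.not_subset] at hnfg hngf
    obtain ⟨x1, hx1f, hx1g⟩ := hnfg
    obtain ⟨x2, hx2g, hx2f⟩ := hngf
    apply pairPP_fourGamete (h f g hfg)
    intro s t
    rw [hmemB] at hx1f hx2g hx3f hx3g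
    rw [hmemB] at hx1g hx2f
    push_neg at hx1g hx2f
    rcases eq_or_ne s (chars f x0) with hs | hs <;> rcases eq_or_ne t (chars g x0) with ht | ht
    · exact ⟨x0, hs.symm, ht.symm⟩
    · exact ⟨x2, by omega, by omega⟩
    · exact ⟨x1, by omega, by omega⟩
    · exact ⟨x3, by omega, by omega⟩
  -- vertex type
  let V := {A : Finset X // A = Finset.univ ∨ ((∃ f, A = B f) ∧ A.Nonempty)}
  haveI : Fintype V := Fintype.ofFinite V
  have hVne : ∀ A : V, A.1.Nonempty := by
    rintro ⟨A, rfl | hA⟩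
    · exact ⟨x0, Finset.mem_univ x0⟩
    · exact hA.2
  have hcomp : ∀ (A C : V) (x : X), x ∈ A.1 → x ∈ C.1 → A.1 ⊆ C.1 ∨ C.1 ⊆ A.1 := by
    rintro ⟨A, hA⟩ ⟨C, hC⟩ x hxA hxC
    change x ∈ A at hxA
    change x ∈ C at hxC
    change A ⊆ C ∨ C ⊆ A
    rcases hA with hA | ⟨⟨f, hAf⟩, -⟩
    · subst hA; exact Or.inr (Finset.subset_univ _)
    rcases hC with hC | ⟨⟨g, hCg⟩, -⟩
    · subst hC; exact Or.inl (Finset.subset_univ _)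
    subst hAf
    subst hCg
    rcases lam f g with h' | h' | h'
    · exact Or.inl h'
    · exact Or.inr h'
    · exact absurd hxC (h' x hxA)
  let top : V := ⟨Finset.univ, Or.inl rfl⟩
  let Par : V → V → Prop := fun A C => A.1 ⊂ C.1 ∧ ∀ D : V, A.1 ⊂ D.1 → C.1 ⊆ D.1
  have parent_exists : ∀ A : V, A ≠ top → ∃ C, Par A C := by
    intro A hA
    have hne : A.1 ≠ Finset.univ := fun h => hA (Subtype.ext h)
    have h1 : (Finset.univ.filter (fun C : V => A.1 ⊂ C.1)).Nonempty := by
      refine ⟨top, Finset.mem_filter.2 ⟨Finset.mem_univ _, ?_⟩⟩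
      exact Finset.ssubset_univ_iff.2 hne
    obtain ⟨C, hCmem, hCmin⟩ := Finset.exists_min_image _ (fun C : V => C.1.card) h1
    rw [Finset.mem_filter] at hCmem
    refine ⟨C, hCmem.2, ?_⟩
    intro D hD
    obtain ⟨x, hx⟩ := hVne A
    rcases hcomp C D x (hCmem.2.1 hx) (hD.1 hx) with hs | hs
    · exact hs
    · have hle := hCmin D (Finset.mem_filter.2 ⟨Finset.mem_univ _, hD⟩)
      have : D.1 = C.1 := Finset.eq_of_subset_of_card_le hs hle
      exact this ▸ subset_rfl
  have par_unique : ∀ {A C C' : V}, Par A C → Par A C' → C = C' := by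
    intro A C C' h1 h2
    exact Subtype.ext (subset_antisymm (h1.2 C' h2.1) (h2.2 C h1.1))
  have par_card : ∀ {A C : V}, Par A C → A.1.card < C.1.card :=
    fun h' => Finset.card_lt_card h'.1
  let T : SimpleGraph V :=
    { Adj := fun A C => Par A C ∨ Par C A
      symm := ⟨fun A C h' => h'.symm⟩
      loopless := by constructor; rintro A (h' | h') <;> exact ssubset_irrefl _ h'.1 }
  -- climbing lemma
  have climb : ∀ (Sset : Set V) (t : V) (ht : t ∈ Sset),
      (∀ A : V, A ∈ Sset → A ≠ t → ∃ C, C ∈ Sset ∧ Par A C) →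
      ∀ (A : V) (hA : A ∈ Sset), (T.induce Sset).Reachable ⟨A, hA⟩ ⟨t, ht⟩ := by
    intro Sset t ht hstep
    have main : ∀ (n : ℕ) (A : V) (hA : A ∈ Sset), Fintype.card X - A.1.card ≤ n →
        (T.induce Sset).Reachable ⟨A, hA⟩ ⟨t, ht⟩ := by
      intro n
      induction n with
      | zero =>
        intro A hA hcard
        by_cases hAt : A = t
        · subst hAt; exact SimpleGraph.Reachable.refl _
        · obtain ⟨C, hCS, hPar⟩ := hstep A hA hAt
          have h1 := par_card hPar
          have h2 : C.1.card ≤ Fintype.card X := by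
            simpa using Finset.card_le_univ C.1
          omega
      | succ n ih =>
        intro A hA hcard
        by_cases hAt : A = t
        · subst hAt; exact SimpleGraph.Reachable.refl _
        · obtain ⟨C, hCS, hPar⟩ := hstep A hA hAt
          have hadj : (T.induce Sset).Adj ⟨A, hA⟩ ⟨C, hCS⟩ := Or.inl hPar
          refine hadj.reachable.trans (ih C hCS ?_)
          have h1 := par_card hPar
          have h2 : C.1.card ≤ Fintype.card X := by
            simpa using Finset.card_le_univ C.1
          omega
    intro A hA; exact main _ A hA le_rfl
  -- connectivity
  have reachT : ∀ A : V, T.Reachable A top := by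
    intro A
    have h1 := climb Set.univ top (Set.mem_univ _)
      (fun A _ hAt => (parent_exists A hAt).imp (fun C hC => ⟨Set.mem_univ _, hC⟩))
      A (Set.mem_univ _)
    exact h1.map (valHom T Set.univ)
  haveI : Nonempty V := ⟨top⟩
  have hconn : T.Connected := SimpleGraph.Connected.mk (fun A C => (reachT A).trans (reachT C).symm)
  -- acyclicity
  have key : ∀ A C : V, Par A C →
      ¬ (T \ SimpleGraph.fromEdgeSet {s(A, C)}).Reachable A C := by
    rintro A C hPar ⟨w⟩
    have hA : A ∈ {D : V | D.1 ⊆ A.1} := by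
      simp only [Set.mem_setOf_eq]
      exact subset_rfl
    have hC : C ∉ {D : V | D.1 ⊆ A.1} := fun h' => hPar.1.2 h'
    obtain ⟨d, hdmem, hdf, hds⟩ := w.exists_boundary_dart _ hA hC
    have hadj := d.adj
    rw [SimpleGraph.sdiff_adj, SimpleGraph.fromEdgeSet_adj] at hadj
    obtain ⟨hTadj, hnot⟩ := hadj
    rcases hTadj with hP | hP
    · by_cases hfa : d.fst = A
      · have hsndC : d.snd = C := by
          rw [hfa] at hP
          exact par_unique hP hPar
        refine hnot ⟨?_, ?_⟩
        · rw [hfa, hsndC]; exact Set.mem_singleton _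
        · intro he
          rw [he] at hP
          exact ssubset_irrefl _ hP.1
      · have hss : d.fst.1 ⊂ A.1 :=
          ssubset_of_subset_of_ne hdf (fun h' => hfa (Subtype.ext h'))
        exact hds (hP.2 A hss)
    · exact hds (subset_trans hP.1.1 hdf)
  have hacyc : T.IsAcyclic := by
    rw [SimpleGraph.isAcyclic_iff_forall_adj_isBridge]
    intro A C hAC
    rw [SimpleGraph.isBridge_iff]
    rcases hAC with hP | hP
    · exact key A C hP
    · intro hr
      apply key C A hP
      rw [Sym2.eq_swap] at hr
      exact hr.symm
  have htree : T.IsTree := ⟨hconn, hacyc⟩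
  -- labeling
  refine ⟨V, inferInstance, T,
    fun A f => if A.1 ⊆ B f then 1 - chars f x0 else chars f x0, htree, ?_, ?_⟩
  · -- taxa
    intro x
    have h1 : (Finset.univ.filter (fun C : V => x ∈ C.1)).Nonempty :=
      ⟨top, Finset.mem_filter.2 ⟨Finset.mem_univ _, Finset.mem_univ x⟩⟩
    obtain ⟨M, hMmem, hMmin⟩ := Finset.exists_min_image _ (fun C : V => C.1.card) h1
    rw [Finset.mem_filter] at hMmem
    have hxM : x ∈ M.1 := hMmem.2
    have hMsub : ∀ C : V, x ∈ C.1 → M.1 ⊆ C.1 := by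
      intro C hxC
      rcases hcomp M C x hxM hxC with hs | hs
      · exact hs
      · have hle := hMmin C (Finset.mem_filter.2 ⟨Finset.mem_univ _, hxC⟩)
        have : C.1 = M.1 := Finset.eq_of_subset_of_card_le hs hle
        exact this ▸ subset_rfl
    refine ⟨M, fun f => ?_⟩
    by_cases hxf : x ∈ B f
    · have hBf : (B f).Nonempty := ⟨x, hxf⟩
      have hsub : M.1 ⊆ B f := hMsub ⟨B f, Or.inr ⟨⟨f, rfl⟩, hBf⟩⟩ hxf
      have hne : chars f x ≠ chars f x0 := (hmemB f x).1 hxf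
      simp only [if_pos hsub]
      omega
    · have hnsub : ¬ M.1 ⊆ B f := fun hsub => hxf (hsub hxM)
      have heq : chars f x = chars f x0 := by
        by_contra hc; exact hxf ((hmemB f x).2 hc)
      simp only [if_neg hnsub]
      omega
  · -- convexity
    intro f s
    by_cases hs : s = chars f x0
    · subst hs
      have hset : {v : V | (if v.1 ⊆ B f then 1 - chars f x0 else chars f x0) = chars f x0}
          = {v : V | ¬ v.1 ⊆ B f} := by
        ext A
        simp only [Set.mem_setOf_eq]
        by_cases hsub : A.1 ⊆ B f
        · rw [if_pos hsub]
          exact iff_of_false (by omega) (not_not_intro hsub)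
        · rw [if_neg hsub]
          exact iff_of_true rfl hsub
      rw [hset]
      have htop : top ∈ {v : V | ¬ v.1 ⊆ B f} :=
        fun hsub => hx0B f (hsub (Finset.mem_univ x0))
      have hstep : ∀ A : V, A ∈ {v : V | ¬ v.1 ⊆ B f} → A ≠ top →
          ∃ C, C ∈ {v : V | ¬ v.1 ⊆ B f} ∧ Par A C := by
        intro A hA hAt
        obtain ⟨C, hC⟩ := parent_exists A hAt
        exact ⟨C, fun hsub => hA (subset_trans hC.1.1 hsub), hC⟩
      rintro ⟨A, hA⟩ ⟨C, hC⟩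
      exact (climb _ top htop hstep A hA).trans (climb _ top htop hstep C hC).symm
    · have hset : {v : V | (if v.1 ⊆ B f then 1 - chars f x0 else chars f x0) = s}
          = {v : V | v.1 ⊆ B f} := by
        ext A
        simp only [Set.mem_setOf_eq]
        by_cases hsub : A.1 ⊆ B f
        · rw [if_pos hsub]
          exact iff_of_true (by omega) hsub
        · rw [if_neg hsub]
          exact iff_of_false (by omega) hsub
      rw [hset]
      by_cases hBne : (B f).Nonempty
      · have ht : (⟨B f, Or.inr ⟨⟨f, rfl⟩, hBne⟩⟩ : V) ∈ {v : V | v.1 ⊆ B f} := by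
          show B f ⊆ B f
          exact subset_rfl
        have hstep : ∀ A : V, A ∈ {v : V | v.1 ⊆ B f} →
            A ≠ (⟨B f, Or.inr ⟨⟨f, rfl⟩, hBne⟩⟩ : V) →
            ∃ C, C ∈ {v : V | v.1 ⊆ B f} ∧ Par A C := by
          intro A hA hAt
          have hss : A.1 ⊂ B f := ssubset_of_subset_of_ne hA (fun h' => hAt (Subtype.ext h'))
          have hAtop : A ≠ top := by
            intro hAeq
            have : Finset.univ ⊂ B f := by
              rw [← show A.1 = Finset.univ from congrArg Subtype.val hAeq]
              exact hss
            exact hx0B f (this.1 (Finset.mem_univ x0))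
          obtain ⟨C, hC⟩ := parent_exists A hAtop
          have hCsub : C.1 ⊆ B f := hC.2 ⟨B f, Or.inr ⟨⟨f, rfl⟩, hBne⟩⟩ hss
          exact ⟨C, hCsub, hC⟩
        rintro ⟨A, hA⟩ ⟨C, hC⟩
        exact (climb _ _ ht hstep A hA).trans (climb _ _ ht hstep C hC).symm
      · rintro ⟨A, hA⟩ u
        exfalso
        obtain ⟨x, hx⟩ := hVne A
        exact hBne ⟨x, hA hx⟩

/-- A finite family of 2-state characters has a perfect phylogeny iff every
two characters of the family have a perfect phylogeny. -/
theorem two_state_pp_iff_pairwise {X F : Type} [Fintype X] [Fintype F]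
    (chars : F → X → Fin 2) :
    PerfectPhylogeny 2 chars ↔ ∀ a b : F, a ≠ b → PairPP 2 (chars a) (chars b) := by
  constructor
  · rintro ⟨V, fV, T, ℓ, htree, htax, hconv⟩ a b hab
    refine ⟨V, fV, T, fun v => ![ℓ v a, ℓ v b], htree, ?_, ?_⟩
    · intro x
      obtain ⟨v, hv⟩ := htax x
      refine ⟨v, fun f => ?_⟩
      fin_cases f
      · simpa using hv a
      · simpa using hv b
    · intro f s
      fin_cases f
      · simpa using hconv a s
      · simpa using hconv b s
  · exact backward chars
end

section
/- (Four gametes test) Two 2-state characters a and b on a finite set of taxa X have a perfect phylogeny if and only if it is not the case that every one of the four pairs (i, j) ∈ Fin 2 × Fin 2 is realized by some taxon x ∈ X with a x = i and b x = j. -/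
open SimpleGraph in
private def FourGametes.indHom {V : Type} (T : SimpleGraph V) (s : Set V) : T.induce s →g T :=
  ⟨Subtype.val, fun h => h⟩

private lemma FourGametes.walk_in_set {V : Type} {T : SimpleGraph V} {s : Set V}
    (h : (T.induce s).Preconnected) {u v : V} (hu : u ∈ s) (hv : v ∈ s) :
    ∃ p : T.Walk u v, ∀ w ∈ p.support, w ∈ s := by
  obtain ⟨q⟩ := h ⟨u, hu⟩ ⟨v, hv⟩
  refine ⟨q.map (FourGametes.indHom T s), ?_⟩
  intro w hw
  have hw2 : w ∈ (q.map (FourGametes.indHom T s)).support := hw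
  rw [SimpleGraph.Walk.support_map, List.mem_map] at hw2
  obtain ⟨⟨w', hw'⟩, -, rfl⟩ := hw2
  exact hw'

private lemma FourGametes.pre_of_adj {V : Type} {T : SimpleGraph V} {s : Set V}
    (h : ∀ u ∈ s, ∀ v ∈ s, u = v ∨ T.Adj u v) : (T.induce s).Preconnected := by
  rintro ⟨u, hu⟩ ⟨v, hv⟩
  rcases h u hu v hv with rfl | hA
  · exact SimpleGraph.Reachable.refl _
  · exact SimpleGraph.Adj.reachable hA

private lemma FourGametes.pg3_isTree : (SimpleGraph.pathGraph 3).IsTree := by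
  letI : DecidableRel (SimpleGraph.pathGraph 3).Adj :=
    fun u v => decidable_of_iff _ (SimpleGraph.pathGraph_adj).symm
  constructor
  · exact SimpleGraph.pathGraph_connected 2
  · intro v c hc
    have h3 := hc.three_le_length
    have hnd : c.edges.Nodup := hc.edges_nodup
    have hsub : c.edges.toFinset ⊆ ({s(0,1), s(1,2)} : Finset (Sym2 (Fin 3))) := by
      intro e he
      rw [List.mem_toFinset] at he
      have hee := c.edges_subset_edgeSet he
      revert hee
      refine Sym2.ind (fun x y => ?_) e
      rw [SimpleGraph.mem_edgeSet, SimpleGraph.pathGraph_adj]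
      fin_cases x <;> fin_cases y <;> decide
    have hc1 : c.edges.toFinset.card = c.edges.length := List.toFinset_card_of_nodup hnd
    have hc2 := Finset.card_le_card hsub
    have hlen : c.edges.length = c.length := c.length_edges
    have hle : ({s(0,1), s(1,2)} : Finset (Sym2 (Fin 3))).card ≤ 2 :=
      (Finset.card_insert_le _ _).trans (by simp)
    omega

/-- four gametes test: two 2-state characters have a perfect phylogeny iff
not all four combinations of states are realized by taxa. -/
theorem four_gametes_test {X : Type} [Fintype X] (a b : X → Fin 2) :
    PairPP 2 a b ↔ ¬ (∀ i j : Fin 2, ∃ x : X, a x = i ∧ b x = j) := by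
  constructor
  · rintro ⟨V, _, T, ℓ, htree, hcover, hconn⟩ hall
    classical
    classical
    have hv : ∀ i j : Fin 2, ∃ v : V, ℓ v 0 = i ∧ ℓ v 1 = j := by
      intro i j
      obtain ⟨x, hx1, hx2⟩ := hall i j
      obtain ⟨v, hvv⟩ := hcover x
      exact ⟨v, by simpa [hx1] using hvv 0, by simpa [hx2] using hvv 1⟩
    obtain ⟨v00, h00a, h00b⟩ := hv 0 0
    obtain ⟨v01, h01a, h01b⟩ := hv 0 1
    obtain ⟨v10, h10a, h10b⟩ := hv 1 0
    obtain ⟨v11, h11a, h11b⟩ := hv 1 1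
    have two : ∀ t : Fin 2, t = 0 ∨ t = 1 := by decide
    have ne01 : (0 : Fin 2) ≠ 1 := by decide
    -- walks within label classes
    obtain ⟨qa0, hqa0⟩ := FourGametes.walk_in_set (hconn 0 0)
      (show v01 ∈ {v | ℓ v 0 = 0} from h01a) (show v00 ∈ _ from h00a)
    obtain ⟨qb0, hqb0⟩ := FourGametes.walk_in_set (hconn 1 0)
      (show v00 ∈ {v | ℓ v 1 = 0} from h00b) (show v10 ∈ _ from h10b)
    obtain ⟨qb1, hqb1⟩ := FourGametes.walk_in_set (hconn 1 1)
      (show v01 ∈ {v | ℓ v 1 = 1} from h01b) (show v11 ∈ _ from h11b)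
    obtain ⟨qa1, hqa1⟩ := FourGametes.walk_in_set (hconn 0 1)
      (show v11 ∈ {v | ℓ v 0 = 1} from h11a) (show v10 ∈ _ from h10a)
    -- path P from v01 to v10
    set W1 := qa0.append qb0 with hW1
    set W2 := qb1.append qa1 with hW2
    have hPeq : W1.toPath = W2.toPath := htree.IsAcyclic.path_unique _ _
    have hP : ∀ w ∈ (W1.toPath : T.Walk v01 v10).support,
        (ℓ w 0 = 0 ∧ ℓ w 1 = 1) ∨ (ℓ w 0 = 1 ∧ ℓ w 1 = 0) := by
      intro w hw
      have h1 : w ∈ W1.support := W1.support_toPath_subset hw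
      have h2 : w ∈ W2.support := W2.support_toPath_subset (hPeq ▸ hw)
      rw [hW1, SimpleGraph.Walk.mem_support_append_iff] at h1
      rw [hW2, SimpleGraph.Walk.mem_support_append_iff] at h2
      have k1 : ℓ w 0 = 0 ∨ ℓ w 1 = 0 := h1.imp (hqa0 w) (hqb0 w)
      have k2 : ℓ w 1 = 1 ∨ ℓ w 0 = 1 := h2.imp (hqb1 w) (hqa1 w)
      rcases two (ℓ w 0) with h | h <;> rcases two (ℓ w 1) with h' | h' <;> simp_all
    obtain ⟨d1, hd1p, hd1f, hd1s⟩ := (W1.toPath : T.Walk v01 v10).exists_boundary_dart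
      {v | ℓ v 0 = 0} h01a (by simp [h10a])
    have d1fmem : d1.fst ∈ (W1.toPath : T.Walk v01 v10).support :=
      SimpleGraph.Walk.dart_fst_mem_support_of_mem_darts _ hd1p
    have d1smem : d1.snd ∈ (W1.toPath : T.Walk v01 v10).support :=
      SimpleGraph.Walk.dart_snd_mem_support_of_mem_darts _ hd1p
    have hd1f0 : ℓ d1.fst 0 = 0 := hd1f
    have hd1f1 : ℓ d1.fst 1 = 1 := by
      rcases hP _ d1fmem with ⟨_, h⟩ | ⟨h, _⟩
      · exact h
      · exact absurd (hd1f0.symm.trans h) ne01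
    have hd1s0 : ℓ d1.snd 0 = 1 := by
      rcases two (ℓ d1.snd 0) with h | h
      · exact absurd h hd1s
      · exact h
    have hd1s1 : ℓ d1.snd 1 = 0 := by
      rcases hP _ d1smem with ⟨h, _⟩ | ⟨_, h⟩
      · exact absurd (h.symm.trans hd1s0) ne01
      · exact h
    -- path Q from v00 to v11
    obtain ⟨ra0, hra0⟩ := FourGametes.walk_in_set (hconn 0 0)
      (show v00 ∈ {v | ℓ v 0 = 0} from h00a) (show v01 ∈ _ from h01a)
    obtain ⟨rb1, hrb1⟩ := FourGametes.walk_in_set (hconn 1 1)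
      (show v01 ∈ {v | ℓ v 1 = 1} from h01b) (show v11 ∈ _ from h11b)
    obtain ⟨rb0, hrb0⟩ := FourGametes.walk_in_set (hconn 1 0)
      (show v00 ∈ {v | ℓ v 1 = 0} from h00b) (show v10 ∈ _ from h10b)
    obtain ⟨ra1, hra1⟩ := FourGametes.walk_in_set (hconn 0 1)
      (show v10 ∈ {v | ℓ v 0 = 1} from h10a) (show v11 ∈ _ from h11a)
    set W3 := ra0.append rb1 with hW3
    set W4 := rb0.append ra1 with hW4
    have hQeq : W3.toPath = W4.toPath := htree.IsAcyclic.path_unique _ _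
    have hQ : ∀ w ∈ (W3.toPath : T.Walk v00 v11).support,
        (ℓ w 0 = 0 ∧ ℓ w 1 = 0) ∨ (ℓ w 0 = 1 ∧ ℓ w 1 = 1) := by
      intro w hw
      have h1 : w ∈ W3.support := W3.support_toPath_subset hw
      have h2 : w ∈ W4.support := W4.support_toPath_subset (hQeq ▸ hw)
      rw [hW3, SimpleGraph.Walk.mem_support_append_iff] at h1
      rw [hW4, SimpleGraph.Walk.mem_support_append_iff] at h2
      have k1 : ℓ w 0 = 0 ∨ ℓ w 1 = 1 := h1.imp (hra0 w) (hrb1 w)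
      have k2 : ℓ w 1 = 0 ∨ ℓ w 0 = 1 := h2.imp (hrb0 w) (hra1 w)
      rcases two (ℓ w 0) with h | h <;> rcases two (ℓ w 1) with h' | h' <;> simp_all
    obtain ⟨d2, hd2p, hd2f, hd2s⟩ := (W3.toPath : T.Walk v00 v11).exists_boundary_dart
      {v | ℓ v 0 = 0} h00a (by simp [Set.mem_setOf_eq, h11a])
    have d2fmem : d2.fst ∈ (W3.toPath : T.Walk v00 v11).support :=
      SimpleGraph.Walk.dart_fst_mem_support_of_mem_darts _ hd2p
    have d2smem : d2.snd ∈ (W3.toPath : T.Walk v00 v11).support :=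
      SimpleGraph.Walk.dart_snd_mem_support_of_mem_darts _ hd2p
    have hd2f0 : ℓ d2.fst 0 = 0 := hd2f
    have hd2f1 : ℓ d2.fst 1 = 0 := by
      rcases hQ _ d2fmem with ⟨_, h⟩ | ⟨h, _⟩
      · exact h
      · exact absurd (hd2f0.symm.trans h) ne01
    have hd2s0 : ℓ d2.snd 0 = 1 := by
      rcases two (ℓ d2.snd 0) with h | h
      · exact absurd h hd2s
      · exact h
    have hd2s1 : ℓ d2.snd 1 = 1 := by
      rcases hQ _ d2smem with ⟨h, _⟩ | ⟨_, h⟩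
      · exact absurd (h.symm.trans hd2s0) ne01
      · exact h
    -- the bridge contradiction
    have hbridge : T.IsBridge s(d2.fst, d2.snd) :=
      SimpleGraph.isAcyclic_iff_forall_edge_isBridge.mp htree.IsAcyclic
        (T.mem_edgeSet.mpr d2.adj)
    obtain ⟨s1, hs1⟩ := FourGametes.walk_in_set (hconn 0 0)
      (show d2.fst ∈ {v | ℓ v 0 = 0} from hd2f0) (show d1.fst ∈ _ from hd1f0)
    obtain ⟨s2, hs2⟩ := FourGametes.walk_in_set (hconn 0 1)
      (show d1.snd ∈ {v | ℓ v 0 = 1} from hd1s0) (show d2.snd ∈ _ from hd2s0)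
    have hwalk : ∃ p : T.Walk d2.fst d2.snd, s(d2.fst, d2.snd) ∉ p.edges := by
      refine ⟨s1.append (SimpleGraph.Walk.cons d1.adj s2), ?_⟩
      intro hmem
      rw [SimpleGraph.Walk.edges_append, List.mem_append, SimpleGraph.Walk.edges_cons,
        List.mem_cons] at hmem
      rcases hmem with h | h | h
      · have := hs1 _ (SimpleGraph.Walk.snd_mem_support_of_mem_edges s1 h)
        rw [Set.mem_setOf_eq, hd2s0] at this
        exact ne01 this.symm
      · rw [Sym2.eq_iff] at h
        rcases h with ⟨h1, -⟩ | ⟨h1, -⟩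
        · rw [h1, hd1f1] at hd2f1; exact ne01 hd2f1.symm
        · rw [h1, hd1s0] at hd2f0; exact ne01 hd2f0.symm
      · have := hs2 _ (SimpleGraph.Walk.fst_mem_support_of_mem_edges s2 h)
        rw [Set.mem_setOf_eq, hd2f0] at this
        exact ne01 this
    exact (SimpleGraph.isBridge_iff.mp hbridge)
      (SimpleGraph.reachable_delete_edges_iff_exists_walk.mpr hwalk)
  · intro h
    push_neg at h
    obtain ⟨i, j, hmiss0⟩ := h
    have hmiss : ∀ x : X, ¬(a x = i ∧ b x = j) := fun x hx => hmiss0 x hx.1 hx.2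
    have two : ∀ t u : Fin 2, t = u ∨ t = u + 1 := by decide
    have hne : ∀ t : Fin 2, ¬ t = t + 1 := by decide
    refine ⟨Fin 3, inferInstance, SimpleGraph.pathGraph 3,
      (fun v => if v = 0 then ![i, j + 1] else if v = 1 then ![i + 1, j + 1] else ![i + 1, j]),
      FourGametes.pg3_isTree, ?_, ?_⟩
    · intro x
      rcases two (a x) i with ha | ha <;> rcases two (b x) j with hb | hb
      · exact absurd ⟨ha, hb⟩ (hmiss x)
      · exact ⟨0, fun f => by fin_cases f <;> simp [ha, hb]⟩
      · exact ⟨2, fun f => by fin_cases f <;> simp [ha, hb]⟩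
      · exact ⟨1, fun f => by fin_cases f <;> simp [ha, hb]⟩
    · intro f s
      apply FourGametes.pre_of_adj
      intro u hu v hv
      rw [Set.mem_setOf_eq] at hu hv
      fin_cases u <;> fin_cases v <;> fin_cases f <;>
        first
          | exact Or.inl rfl
          | exact Or.inr (by rw [SimpleGraph.pathGraph_adj]; decide)
          | (exfalso; simp at hu hv;
             first
               | exact hne _ (hu.trans hv.symm)
               | exact hne _ (hv.trans hu.symm))
end

section
/- (Estabrook–McMorris) Two 3-state characters a and b on a finite set of taxa X have a perfect phylogeny if and only if the partition intersection graph of a and b is acyclic. -/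
open SimpleGraph

namespace EMaux

variable {V : Type}

lemma walk_in_set {T : SimpleGraph V} {S : Set V}
    (h : (T.induce S).Preconnected) {u v : V} (hu : u ∈ S) (hv : v ∈ S) :
    ∃ W : T.Walk u v, ∀ x ∈ W.support, x ∈ S := by
  obtain ⟨W⟩ := h ⟨u, hu⟩ ⟨v, hv⟩
  refine ⟨W.map (SimpleGraph.Embedding.induce S).toHom, ?_⟩
  intro x hx
  have hx : x ∈ List.map (SimpleGraph.Embedding.induce (G := T) S).toHom W.support := by
    rw [← SimpleGraph.Walk.support_map]; exact hx
  rw [List.mem_map] at hx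
  obtain ⟨y, _, rfl⟩ := hx
  exact y.2

lemma crossing {T : SimpleGraph V} (P : V → Prop) :
    ∀ {u v : V} (W : T.Walk u v), P u → ¬ P v →
    ∃ p q, T.Adj p q ∧ P p ∧ ¬ P q ∧ p ∈ W.support ∧ q ∈ W.support := by
  intro u v W
  induction W with
  | nil => intro h h'; exact absurd h h'
  | @cons u m v h W ih =>
    intro hu hv
    by_cases h2 : P m
    · obtain ⟨p, q, h1, h2, h3, h4, h5⟩ := ih h2 hv
      exact ⟨p, q, h1, h2, h3, by simp [h4], by simp [h5]⟩
    · exact ⟨u, m, h, hu, h2, by simp, by simp [SimpleGraph.Walk.start_mem_support]⟩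

lemma no_detour {T : SimpleGraph V} (hT : T.IsAcyclic) {p q : V}
    (h : T.Adj p q) (W : T.Walk p q) (he : s(p, q) ∉ W.edges) : False := by
  have hb := isAcyclic_iff_forall_adj_isBridge.mp hT h
  rw [SimpleGraph.isBridge_iff] at hb
  refine hb ?_
  have hW : ∀ e ∈ W.edges, ¬ e ∈ ({s(p,q)} : Set (Sym2 V)) := by
    intro e hee hmem
    rw [Set.mem_singleton_iff] at hmem
    exact he (hmem ▸ hee)
  have := (W.toDeleteEdges {s(p,q)} hW).reachable
  exact this

lemma split_at_crossing {α : Type} {T : SimpleGraph V} (f : V → α) :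
    ∀ {u v : V} (W : T.Walk u v), W.IsPath → f u ≠ f v →
    ∃ (p q : V) (W₁ : T.Walk u p) (W₂ : T.Walk q v),
      T.Adj p q ∧ f p ≠ f q ∧
      (∀ x ∈ W₁.support, x ∈ W.support) ∧ (∀ x ∈ W₂.support, x ∈ W.support) ∧
      s(p, q) ∉ W₁.edges ∧ s(p, q) ∉ W₂.edges := by
  intro u v W
  induction W with
  | nil => intro _ h; exact absurd rfl h
  | @cons u m v h W ih =>
    intro hP hf
    have hPW : W.IsPath := hP.of_cons
    have hnd : (s(u, m) :: W.edges).Nodup := hP.isTrail.edges_nodup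
    have hum : s(u, m) ∉ W.edges := by
      intro hmem
      exact (List.nodup_cons.mp hnd).1 hmem
    by_cases h2 : f u = f m
    · have hf' : f m ≠ f v := fun hh => hf (h2.trans hh)
      obtain ⟨p, q, W₁, W₂, ha, hb, hc, hd, he1, he2⟩ := ih hPW hf'
      refine ⟨p, q, Walk.cons h W₁, W₂, ha, hb, ?_, ?_, ?_, he2⟩
      · intro x hx
        rw [Walk.support_cons] at hx ⊢
        rcases List.mem_cons.mp hx with hx | hx
        · exact List.mem_cons.mpr (Or.inl hx)
        · exact List.mem_cons.mpr (Or.inr (hc x hx))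
      · intro x hx
        simp [hd x hx]
      · rw [Walk.edges_cons]
        intro hx
        rcases List.mem_cons.mp hx with hx | hx
        · -- s(p,q) = s(u,m), but s(p,q) ∈ W.edges would contradict... need s(p,q) ∈ W.edges
          -- p,q come from split of W; we know q ∈ W.support and p ∈ W.support but need edge mem.
          -- Instead: since s(p,q) = s(u,m), endpoints: p = u ∧ q = m or p = m ∧ q = u.
          rcases Sym2.eq_iff.mp hx with ⟨rfl, rfl⟩ | ⟨rfl, rfl⟩
          · exact hb h2
          · exact hb h2.symm
        · exact he1 hx
    · refine ⟨u, m, Walk.nil, W, h, h2, ?_, ?_, by simp, hum⟩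
      · intro x hx
        simp only [Walk.support_nil, List.mem_singleton] at hx
        simp [hx]
      · intro x hx
        simp [hx]

lemma mem_support_of_edge_fst {T : SimpleGraph V} {u v p q : V} {W : T.Walk u v}
    (h : s(p, q) ∈ W.edges) : p ∈ W.support :=
  W.fst_mem_support_of_mem_edges h

lemma mem_support_of_edge_snd {T : SimpleGraph V} {u v p q : V} {W : T.Walk u v}
    (h : s(p, q) ∈ W.edges) : q ∈ W.support :=
  W.snd_mem_support_of_mem_edges h

lemma quad_incompat [DecidableEq V] {T : SimpleGraph V} (hT : T.IsAcyclic)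
    {A B : V → Fin 3}
    (hA : ∀ s : Fin 3, (T.induce {v | A v = s}).Preconnected)
    (hB : ∀ s : Fin 3, (T.induce {v | B v = s}).Preconnected)
    {i₁ i₂ j₁ j₂ : Fin 3} (hi : i₁ ≠ i₂) (hj : j₁ ≠ j₂)
    (h11 : ∃ v, A v = i₁ ∧ B v = j₁) (h21 : ∃ v, A v = i₂ ∧ B v = j₁)
    (h12 : ∃ v, A v = i₁ ∧ B v = j₂) (h22 : ∃ v, A v = i₂ ∧ B v = j₂) : False := by
  obtain ⟨x₁, hx₁A, hx₁B⟩ := h11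
  obtain ⟨y₁, hy₁A, hy₁B⟩ := h21
  obtain ⟨x₂, hx₂A, hx₂B⟩ := h12
  obtain ⟨y₂, hy₂A, hy₂B⟩ := h22
  obtain ⟨W0, hW0⟩ := walk_in_set (hB j₁) (show x₁ ∈ {v | B v = j₁} from hx₁B)
    (show y₁ ∈ {v | B v = j₁} from hy₁B)
  set P := W0.bypass with hPdef
  have hPpath : P.IsPath := W0.bypass_isPath
  have hPsup : ∀ x ∈ P.support, B x = j₁ := fun x hx => hW0 x (W0.support_bypass_subset hx)
  have hfv : A x₁ ≠ A y₁ := by rw [hx₁A, hy₁A]; exact hi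
  obtain ⟨p, q, W₁, W₂, hadj, hfpq, hs₁, hs₂, he₁, he₂⟩ := split_at_crossing A P hPpath hfv
  -- p, q ∈ B-class j₁
  have hpB : B p = j₁ := hPsup p (hs₁ p (Walk.end_mem_support _))
  have hqB : B q = j₁ := hPsup q (hs₂ q (Walk.start_mem_support _))
  -- auxiliary walks
  obtain ⟨Q, hQ⟩ := walk_in_set (hA i₁) (show x₁ ∈ {v | A v = i₁} from hx₁A)
    (show x₂ ∈ {v | A v = i₁} from hx₂A)
  obtain ⟨S, hS⟩ := walk_in_set (hB j₂) (show x₂ ∈ {v | B v = j₂} from hx₂B)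
    (show y₂ ∈ {v | B v = j₂} from hy₂B)
  obtain ⟨R, hR⟩ := walk_in_set (hA i₂) (show y₁ ∈ {v | A v = i₂} from hy₁A)
    (show y₂ ∈ {v | A v = i₂} from hy₂A)
  let D : T.Walk p q :=
    W₁.reverse.append (Q.append (S.append (R.reverse.append W₂.reverse)))
  refine no_detour hT hadj D ?_
  intro hmem
  simp only [D, Walk.edges_append, Walk.edges_reverse, List.mem_append, List.mem_reverse] at hmem
  rcases hmem with h' | (h' | (h' | (h' | h')))
  · exact he₁ h'
  · -- in Q : A-class i₁
    have := hQ p (mem_support_of_edge_fst h')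
    have := hQ q (mem_support_of_edge_snd h')
    exact hfpq (by simp_all)
  · -- in S : B-class j₂
    have := hS p (mem_support_of_edge_fst h')
    exact hj (by rw [← hpB]; exact this ▸ (by simp_all))
  · -- in R : A-class i₂
    have := hR p (mem_support_of_edge_fst h')
    have := hR q (mem_support_of_edge_snd h')
    exact hfpq (by simp_all)
  · exact he₂ h'

lemma two_edges {T : SimpleGraph V} (hT : T.IsAcyclic) {A : V → Fin 3}
    (hA : ∀ s : Fin 3, (T.induce {v | A v = s}).Preconnected)
    {p q p' q' : V} (hpq : T.Adj p q) (hp'q' : T.Adj p' q')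
    (hpp' : A p = A p') (hqq' : A q = A q') (hne : A p ≠ A q)
    (hEne : s(p, q) ≠ s(p', q')) : False := by
  obtain ⟨W1, hW1⟩ := walk_in_set (hA (A p)) (show p ∈ {v | A v = A p} from rfl)
    (show p' ∈ {v | A v = A p} from hpp'.symm)
  obtain ⟨W2, hW2⟩ := walk_in_set (hA (A q)) (show q' ∈ {v | A v = A q} from hqq'.symm)
    (show q ∈ {v | A v = A q} from rfl)
  let D : T.Walk p q := W1.append (Walk.cons hp'q' W2)
  refine no_detour hT hpq D ?_
  intro hmem
  simp only [D, Walk.edges_append, Walk.edges_cons, List.mem_append, List.mem_cons] at hmem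
  rcases hmem with h' | (h' | h')
  · have := hW1 q (mem_support_of_edge_snd h')
    exact hne (by simp_all)
  · exact hEne h'
  · have := hW2 p (mem_support_of_edge_fst h')
    exact hne ((by simp_all : A p = A q).symm ▸ rfl)

lemma tri_edges {T : SimpleGraph V} (hT : T.IsAcyclic) {A : V → Fin 3}
    (hA : ∀ s : Fin 3, (T.induce {v | A v = s}).Preconnected)
    {p₁ q₁ p₂ q₂ p₃ q₃ : V}
    (h1 : T.Adj p₁ q₁) (h2 : T.Adj p₂ q₂) (h3 : T.Adj p₃ q₃)
    (c12 : A q₁ = A p₂) (c23 : A q₂ = A p₃) (c31 : A q₃ = A p₁)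
    (d12 : A p₁ ≠ A p₂) (d13 : A p₁ ≠ A p₃) (d23 : A p₂ ≠ A p₃) : False := by
  obtain ⟨Wa, hWa⟩ := walk_in_set (hA (A p₁)) (show p₁ ∈ {v | A v = A p₁} from rfl)
    (show q₃ ∈ {v | A v = A p₁} from c31)
  obtain ⟨Wc, hWc⟩ := walk_in_set (hA (A p₃)) (show p₃ ∈ {v | A v = A p₃} from rfl)
    (show q₂ ∈ {v | A v = A p₃} from c23)
  obtain ⟨Wb, hWb⟩ := walk_in_set (hA (A p₂)) (show p₂ ∈ {v | A v = A p₂} from rfl)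
    (show q₁ ∈ {v | A v = A p₂} from c12)
  let D : T.Walk p₁ q₁ :=
    Wa.append (Walk.cons h3.symm (Wc.append (Walk.cons h2.symm Wb)))
  refine no_detour hT h1 D ?_
  intro hmem
  simp only [D, Walk.edges_append, Walk.edges_cons, List.mem_append, List.mem_cons] at hmem
  rcases hmem with h' | (h' | (h' | (h' | h')))
  · -- in Wa (class A p₁): then q₁ ∈ class A p₁, but A q₁ = A p₂ ≠ A p₁
    have := hWa q₁ (mem_support_of_edge_snd h')
    exact d12 (by simp_all)
  · -- s(p₁,q₁) = s(q₃,p₃)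
    rcases Sym2.eq_iff.mp h' with ⟨he1, he2⟩ | ⟨he1, he2⟩
    · -- p₁ = q₃, q₁ = p₃ : A q₁ = A p₃ but A q₁ = A p₂ ≠ A p₃
      exact d23 (c12 ▸ he2 ▸ rfl)
    · -- p₁ = p₃
      exact d13 (he1 ▸ rfl)
  · -- in Wc (class A p₃): p₁ ∈ class A p₃
    have := hWc p₁ (mem_support_of_edge_fst h')
    exact d13 (by simp_all)
  · -- s(p₁,q₁) = s(q₂,p₂)
    rcases Sym2.eq_iff.mp h' with ⟨he1, he2⟩ | ⟨he1, he2⟩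
    · -- p₁ = q₂ : A p₁ = A q₂ = A p₃
      exact d13 (he1 ▸ c23 ▸ rfl)
    · -- p₁ = p₂
      exact d12 (he1 ▸ rfl)
  · -- in Wb (class A p₂): p₁ ∈ class A p₂
    have := hWb p₁ (mem_support_of_edge_fst h')
    exact d12 (by simp_all)

lemma fin3_cases : ∀ i₁ i₂ i₃ x : Fin 3, i₁ ≠ i₂ → i₁ ≠ i₃ → i₂ ≠ i₃ →
    x = i₁ ∨ x = i₂ ∨ x = i₃ := by decide

lemma hex_incompat [DecidableEq V] {T : SimpleGraph V} (hT : T.IsAcyclic)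
    {A B : V → Fin 3}
    (hA : ∀ s : Fin 3, (T.induce {v | A v = s}).Preconnected)
    (hB : ∀ s : Fin 3, (T.induce {v | B v = s}).Preconnected)
    {i₁ i₂ i₃ j₁ j₂ j₃ : Fin 3}
    (hi12 : i₁ ≠ i₂) (hi13 : i₁ ≠ i₃) (hi23 : i₂ ≠ i₃)
    (hj12 : j₁ ≠ j₂) (hj13 : j₁ ≠ j₃) (hj23 : j₂ ≠ j₃)
    (h11 : ∃ v, A v = i₁ ∧ B v = j₁) (h21 : ∃ v, A v = i₂ ∧ B v = j₁)
    (h22 : ∃ v, A v = i₂ ∧ B v = j₂) (h32 : ∃ v, A v = i₃ ∧ B v = j₂)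
    (h33 : ∃ v, A v = i₃ ∧ B v = j₃) (h13 : ∃ v, A v = i₁ ∧ B v = j₃) : False := by
  -- crossing edge in B-class j with A starting at i
  have key : ∀ (i i' j : Fin 3), i ≠ i' →
      (∃ v, A v = i ∧ B v = j) → (∃ v, A v = i' ∧ B v = j) →
      ∃ p q, T.Adj p q ∧ A p = i ∧ A q ≠ i ∧ B p = j ∧ B q = j := by
    intro i i' j hii' ⟨x, hxA, hxB⟩ ⟨y, hyA, hyB⟩
    obtain ⟨W, hW⟩ := walk_in_set (hB j) (show x ∈ {v | B v = j} from hxB)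
      (show y ∈ {v | B v = j} from hyB)
    obtain ⟨p, q, hadj, hp, hq, hps, hqs⟩ := crossing (fun v => A v = i) W hxA
      (fun hh => hii' (hh.symm.trans hyA))
    exact ⟨p, q, hadj, hp, hq, hW p hps, hW q hqs⟩
  obtain ⟨p₁, q₁, e₁, hp₁, hq₁, hBp₁, hBq₁⟩ := key i₁ i₂ j₁ hi12 h11 h21
  obtain ⟨p₂, q₂, e₂, hp₂, hq₂, hBp₂, hBq₂⟩ := key i₂ i₃ j₂ hi23 h22 h32
  obtain ⟨p₃, q₃, e₃, hp₃, hq₃, hBp₃, hBq₃⟩ := key i₃ i₁ j₃ (fun h => hi13 h.symm) h33 h13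
  -- edges pairwise distinct via B classes
  have hne12 : s(p₁, q₁) ≠ s(p₂, q₂) := by
    intro h
    rcases Sym2.eq_iff.mp h with ⟨he1, _⟩ | ⟨he1, _⟩
    · exact hj12 (hBp₁ ▸ he1 ▸ hBp₂ ▸ rfl)
    · exact hj12 (hBp₁ ▸ he1 ▸ hBq₂ ▸ rfl)
  have hne13 : s(p₁, q₁) ≠ s(p₃, q₃) := by
    intro h
    rcases Sym2.eq_iff.mp h with ⟨he1, _⟩ | ⟨he1, _⟩
    · exact hj13 (hBp₁ ▸ he1 ▸ hBp₃ ▸ rfl)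
    · exact hj13 (hBp₁ ▸ he1 ▸ hBq₃ ▸ rfl)
  have hne23 : s(p₂, q₂) ≠ s(p₃, q₃) := by
    intro h
    rcases Sym2.eq_iff.mp h with ⟨he1, _⟩ | ⟨he1, _⟩
    · exact hj23 (hBp₂ ▸ he1 ▸ hBp₃ ▸ rfl)
    · exact hj23 (hBp₂ ▸ he1 ▸ hBq₃ ▸ rfl)
  -- case analysis on the classes of q₁, q₂, q₃
  have swap12 : s(p₁, q₁) ≠ s(q₂, p₂) := fun h => hne12 (h.trans (Sym2.eq_swap))
  have swap13 : s(p₁, q₁) ≠ s(q₃, p₃) := fun h => hne13 (h.trans (Sym2.eq_swap))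
  have swap23 : s(p₂, q₂) ≠ s(q₃, p₃) := fun h => hne23 (h.trans (Sym2.eq_swap))
  have case23 : A q₂ = i₃ → A q₃ = i₂ → False := by
    intro hg2 hg3
    exact two_edges hT hA e₂ e₃.symm (by rw [hp₂, hg3]) (by rw [hg2, hp₃])
      (by rw [hp₂, hg2]; exact hi23) swap23
  rcases fin3_cases i₁ i₂ i₃ (A q₁) hi12 hi13 hi23 with hg1 | hg1 | hg1
  · exact hq₁ hg1
  · -- A q₁ = i₂
    rcases fin3_cases i₁ i₂ i₃ (A q₂) hi12 hi13 hi23 with hg2 | hg2 | hg2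
    · -- A q₂ = i₁ : two edges e₁, e₂.swap
      exact two_edges hT hA e₁ e₂.symm (by rw [hp₁, hg2]) (by rw [hg1, hp₂])
        (by rw [hp₁, hg1]; exact hi12) swap12
    · exact hq₂ hg2
    · -- A q₂ = i₃
      rcases fin3_cases i₁ i₂ i₃ (A q₃) hi12 hi13 hi23 with hg3 | hg3 | hg3
      · -- triangle e₁ e₂ e₃
        exact tri_edges hT hA e₁ e₂ e₃ (by rw [hg1, hp₂]) (by rw [hg2, hp₃])
          (by rw [hg3, hp₁]) (by rw [hp₁, hp₂]; exact hi12)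
          (by rw [hp₁, hp₃]; exact hi13) (by rw [hp₂, hp₃]; exact hi23)
      · exact case23 hg2 hg3
      · exact hq₃ hg3
  · -- A q₁ = i₃
    rcases fin3_cases i₁ i₂ i₃ (A q₃) hi12 hi13 hi23 with hg3 | hg3 | hg3
    · -- two edges e₁, e₃.swap
      exact two_edges hT hA e₁ e₃.symm (by rw [hp₁, hg3]) (by rw [hg1, hp₃])
        (by rw [hp₁, hg1]; exact hi13) swap13
    · -- A q₃ = i₂
      rcases fin3_cases i₁ i₂ i₃ (A q₂) hi12 hi13 hi23 with hg2 | hg2 | hg2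
      · -- triangle e₁ e₃ e₂
        exact tri_edges hT hA e₁ e₃ e₂ (by rw [hg1, hp₃]) (by rw [hg3, hp₂])
          (by rw [hg2, hp₁]) (by rw [hp₁, hp₃]; exact hi13)
          (by rw [hp₁, hp₂]; exact hi12) (fun h => hi23 (hp₂ ▸ hp₃ ▸ h.symm))
      · exact hq₂ hg2
      · exact case23 hg2 hg3
    · exact hq₃ hg3

lemma support_getElem? {G : SimpleGraph V} :
    ∀ {u v : V} (p : G.Walk u v) (k : ℕ), k ≤ p.length →
      p.support[k]? = some (p.getVert k) := by
  intro u v p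
  induction p with
  | nil =>
    intro k hk
    simp only [Walk.length_nil, Nat.le_zero] at hk
    subst hk
    simp
  | @cons u m v h p ih =>
    intro k hk
    cases k with
    | zero => simp [Walk.getVert_zero]
    | succ k =>
      rw [Walk.support_cons, List.getElem?_cons_succ, Walk.getVert_cons_succ]
      exact ih k (by simpa using hk)

lemma cycle_getVert_inj {G : SimpleGraph V} {v : V} {c : G.Walk v v} (hc : c.IsCycle)
    {s t : ℕ} (hst : s < t) (ht : t < c.length) : c.getVert s ≠ c.getVert t := by
  have hnd := hc.support_nodup
  have hlen : c.support.length = c.length + 1 := Walk.length_support c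
  have htlen : c.support.tail.length = c.length := by
    rw [List.length_tail, hlen]; omega
  have htail : ∀ k, k < c.length → c.support.tail[k]? = some (c.getVert (k + 1)) := by
    intro k hk
    have h1 := support_getElem? c (k + 1) (by omega)
    rw [Walk.support_eq_cons, List.getElem?_cons_succ] at h1
    exact h1
  intro heq
  rcases Nat.eq_zero_or_pos s with rfl | hs
  · -- getVert 0 = v = getVert c.length
    have h0 : c.getVert t = c.getVert c.length := by
      rw [Walk.getVert_length, ← heq, Walk.getVert_zero]
    have h1 := htail (t - 1) (by omega)
    have h2 := htail (c.length - 1) (by omega)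
    rw [show t - 1 + 1 = t by omega] at h1
    rw [show c.length - 1 + 1 = c.length by omega] at h2
    have h3 : c.support.tail[t - 1]? = c.support.tail[c.length - 1]? := by
      rw [h1, h2, h0]
    have h4 := (List.getElem?_inj (by omega : t - 1 < c.support.tail.length) hnd).mp h3
    omega
  · have h1 := htail (s - 1) (by omega)
    have h2 := htail (t - 1) (by omega)
    rw [show s - 1 + 1 = s by omega] at h1
    rw [show t - 1 + 1 = t by omega] at h2
    have h3 : c.support.tail[s - 1]? = c.support.tail[t - 1]? := by
      rw [h1, h2, heq]
    have h4 := (List.getElem?_inj (by omega : s - 1 < c.support.tail.length) hnd).mp h3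
    omega

end EMaux

section ForwardDir

variable {X : Type} {a b : X → Fin 3}

lemma pig_adj_flip {u w : Bool × Fin 3} (h : (pig a b).Adj u w) : w.1 = !u.1 := by
  rcases h with ⟨h1, h2, -⟩ | ⟨h1, h2, -⟩ <;> rw [h1, h2] <;> rfl

lemma pig_realize {u w : Bool × Fin 3} (h : (pig a b).Adj u w) (hu : u.1 = false) :
    ∃ x, a x = u.2 ∧ b x = w.2 := by
  rcases h with ⟨-, -, hx⟩ | ⟨h1, -, -⟩
  · exact hx
  · rw [hu] at h1; exact absurd h1 (by simp)

theorem pp_to_acyclic [Fintype X] (hPP : PairPP 3 a b) : (pig a b).IsAcyclic := by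
  classical
  obtain ⟨V, fV, T, ℓ, hTree, hTaxa, hConn⟩ := hPP
  haveI : DecidableEq V := Classical.decEq V
  intro v c hc
  have hvert : ∀ (i j : Fin 3), (∃ x, a x = i ∧ b x = j) →
      ∃ w : V, ℓ w 0 = i ∧ ℓ w 1 = j := by
    rintro i j ⟨x, hx1, hx2⟩
    obtain ⟨w, hw⟩ := hTaxa x
    refine ⟨w, ?_, ?_⟩
    · simpa [hx1] using hw 0
    · simpa [Matrix.cons_val_one, Matrix.head_cons, hx2] using hw 1
  set n := c.length with hn
  have h3 : 3 ≤ n := hc.three_le_length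
  have halt : ∀ k, k ≤ n → (c.getVert k).1 = if k % 2 = 0 then v.1 else !v.1 := by
    intro k
    induction k with
    | zero => intro _; simp
    | succ k ih =>
      intro hk
      have hkn : k < n := by omega
      have hstep := pig_adj_flip (c.adj_getVert_succ hkn)
      rw [hstep, ih (by omega)]
      by_cases h2 : k % 2 = 0
      · have h2' : ¬ ((k + 1) % 2 = 0) := by omega
        simp [h2, h2']
      · have h2' : (k + 1) % 2 = 0 := by omega
        simp [h2, h2']
  have hneven : n % 2 = 0 := by
    have h1 := halt n le_rfl
    rw [Walk.getVert_length] at h1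
    by_contra h2
    rw [if_neg h2] at h1
    simp at h1
  have hinj : Function.Injective (fun k : Fin n => c.getVert k) := by
    intro k l hkl
    by_contra hne
    rcases lt_trichotomy (k : ℕ) (l : ℕ) with h | h | h
    · exact EMaux.cycle_getVert_inj hc h l.2 hkl
    · exact hne (Fin.ext h)
    · exact EMaux.cycle_getVert_inj hc h k.2 hkl.symm
  have hle6 : n ≤ 6 := by
    have := Fintype.card_le_of_injective _ hinj
    simpa using this
  have hC : ∀ s : Fin 3, (T.induce {w | ℓ w 0 = s}).Preconnected := fun s => hConn 0 s
  have hD : ∀ s : Fin 3, (T.induce {w | ℓ w 1 = s}).Preconnected := fun s => hConn 1 s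
  have hn46 : n = 4 ∨ n = 6 := by omega
  -- generic facts
  have hadj : ∀ k, k < n → (pig a b).Adj (c.getVert k) (c.getVert (k + 1)) :=
    fun k hk => c.adj_getVert_succ hk
  have hwrap : c.getVert n = c.getVert 0 := by
    rw [Walk.getVert_length, Walk.getVert_zero]
  have hdist : ∀ s t, s < t → t < n → c.getVert s ≠ c.getVert t :=
    fun s t hst ht => EMaux.cycle_getVert_inj hc hst ht
  have hside : ∀ k, k ≤ n → (c.getVert k).1 = if k % 2 = 0 then v.1 else !v.1 := halt
  -- distinct second components for same-parity indices
  have hd2 : ∀ s t, s < t → t < n → s % 2 = t % 2 → (c.getVert s).2 ≠ (c.getVert t).2 := by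
    intro s t hst ht hpar hsnd
    refine hdist s t hst ht (Prod.ext ?_ hsnd)
    rw [hside s (by omega), hside t (by omega), hpar]
  -- realization from an edge, in both directions
  have hreal : ∀ k, k < n → (c.getVert k).1 = false →
      ∃ w : V, ℓ w 0 = (c.getVert k).2 ∧ ℓ w 1 = (c.getVert (k + 1)).2 :=
    fun k hk hf => hvert _ _ (pig_realize (hadj k hk) hf)
  have hreal' : ∀ k, k < n → (c.getVert (k + 1)).1 = false →
      ∃ w : V, ℓ w 0 = (c.getVert (k + 1)).2 ∧ ℓ w 1 = (c.getVert k).2 :=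
    fun k hk hf => hvert _ _ (pig_realize (hadj k hk).symm hf)
  have hsidesucc : ∀ k, k < n → (c.getVert (k+1)).1 = !(c.getVert k).1 :=
    fun k hk => pig_adj_flip (hadj k hk)
  rcases hn46 with hn4 | hn4 <;>
    rcases Bool.eq_false_or_eq_true (c.getVert 0).1 with h0 | h0
  · -- n = 4, vertex 0 on the true side
    have s1 : (c.getVert 1).1 = false := by rw [hsidesucc 0 (by omega), h0]; rfl
    have s2 : (c.getVert 2).1 = true := by rw [hsidesucc 1 (by omega), s1]; rfl
    have s3 : (c.getVert 3).1 = false := by rw [hsidesucc 2 (by omega), s2]; rfl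
    refine EMaux.quad_incompat hTree.IsAcyclic hC hD
      (hd2 1 3 (by omega) (by omega) (by omega))
      (hd2 0 2 (by omega) (by omega) (by omega))
      (hreal' 0 (by omega) s1) ?_
      (hreal 1 (by omega) s1) (hreal' 2 (by omega) s3)
    · have := hreal 3 (by omega) s3
      rwa [show 3 + 1 = n from by omega, hwrap] at this
  · -- n = 4, vertex 0 on the false side
    have s1 : (c.getVert 1).1 = true := by rw [hsidesucc 0 (by omega), h0]; rfl
    have s2 : (c.getVert 2).1 = false := by rw [hsidesucc 1 (by omega), s1]; rfl
    have s3 : (c.getVert 3).1 = true := by rw [hsidesucc 2 (by omega), s2]; rfl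
    refine EMaux.quad_incompat hTree.IsAcyclic hC hD
      (hd2 0 2 (by omega) (by omega) (by omega))
      (hd2 1 3 (by omega) (by omega) (by omega))
      (hreal 0 (by omega) h0) (hreal' 1 (by omega) s2)
      ?_ (hreal 2 (by omega) s2)
    · -- (i₁, j₂) : edge 3-4 wraps to vertex 0; pair (getVert 0).2, (getVert 3).2
      have := hreal' 3 (by omega) (by rw [show 3 + 1 = n from by omega, hwrap]; exact h0)
      rwa [show 3 + 1 = n from by omega, hwrap] at this
  · -- n = 6, vertex 0 on the true side
    have s1 : (c.getVert 1).1 = false := by rw [hsidesucc 0 (by omega), h0]; rfl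
    have s2 : (c.getVert 2).1 = true := by rw [hsidesucc 1 (by omega), s1]; rfl
    have s3 : (c.getVert 3).1 = false := by rw [hsidesucc 2 (by omega), s2]; rfl
    have s4 : (c.getVert 4).1 = true := by rw [hsidesucc 3 (by omega), s3]; rfl
    have s5 : (c.getVert 5).1 = false := by rw [hsidesucc 4 (by omega), s4]; rfl
    refine EMaux.hex_incompat hTree.IsAcyclic hC hD
      (hd2 1 3 (by omega) (by omega) (by omega))
      (hd2 1 5 (by omega) (by omega) (by omega))
      (hd2 3 5 (by omega) (by omega) (by omega))
      (hd2 2 4 (by omega) (by omega) (by omega))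
      (Ne.symm (hd2 0 2 (by omega) (by omega) (by omega)))
      (Ne.symm (hd2 0 4 (by omega) (by omega) (by omega)))
      (hreal 1 (by omega) s1) (hreal' 2 (by omega) s3)
      (hreal 3 (by omega) s3) (hreal' 4 (by omega) s5)
      ?_ (hreal' 0 (by omega) s1)
    · have := hreal 5 (by omega) s5
      rwa [show 5 + 1 = n from by omega, hwrap] at this
  · -- n = 6, vertex 0 on the false side
    have s1 : (c.getVert 1).1 = true := by rw [hsidesucc 0 (by omega), h0]; rfl
    have s2 : (c.getVert 2).1 = false := by rw [hsidesucc 1 (by omega), s1]; rfl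
    have s3 : (c.getVert 3).1 = true := by rw [hsidesucc 2 (by omega), s2]; rfl
    have s4 : (c.getVert 4).1 = false := by rw [hsidesucc 3 (by omega), s3]; rfl
    have s5 : (c.getVert 5).1 = true := by rw [hsidesucc 4 (by omega), s4]; rfl
    refine EMaux.hex_incompat hTree.IsAcyclic hC hD
      (hd2 0 2 (by omega) (by omega) (by omega))
      (hd2 0 4 (by omega) (by omega) (by omega))
      (hd2 2 4 (by omega) (by omega) (by omega))
      (hd2 1 3 (by omega) (by omega) (by omega))
      (hd2 1 5 (by omega) (by omega) (by omega))
      (hd2 3 5 (by omega) (by omega) (by omega))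
      (hreal 0 (by omega) h0) (hreal' 1 (by omega) s2)
      (hreal 2 (by omega) s2) (hreal' 3 (by omega) s4)
      (hreal 4 (by omega) s4) ?_
    · have := hreal' 5 (by omega) (by rw [show 5 + 1 = n from by omega, hwrap]; exact h0)
      rwa [show 5 + 1 = n from by omega, hwrap] at this

end ForwardDir


section ReverseDir

open SimpleGraph

namespace EMrev

lemma acyclic_add_edge {V : Type} {G : SimpleGraph V} (hG : G.IsAcyclic) {p q : V}
    (h : ¬ G.Reachable p q) (hpq : p ≠ q) :
    (G ⊔ SimpleGraph.fromEdgeSet {s(p, q)}).IsAcyclic := by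
  intro v c hc
  by_cases he : s(p, q) ∈ c.edges
  · have hreach := (SimpleGraph.adj_and_reachable_delete_edges_iff_exists_cycle.mpr
      ⟨v, c, hc, he⟩).2
    refine h (hreach.mono ?_)
    intro x y hxy
    rw [SimpleGraph.deleteEdges_adj] at hxy
    rcases hxy.1 with h1 | h1
    · exact h1
    · exact absurd h1.1 hxy.2
  · have hsub : ∀ e ∈ c.edges, e ∈ G.edgeSet := by
      intro e hee
      have h2 := c.edges_subset_edgeSet hee
      rw [SimpleGraph.edgeSet_sup] at h2
      rcases h2 with h1 | h1
      · exact h1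
      · rw [SimpleGraph.edgeSet_fromEdgeSet] at h1
        exact absurd ((Set.mem_singleton_iff.mp h1.1) ▸ hee) he
    exact hG (c.transfer G hsub) (hc.transfer hsub)

lemma exists_tree_between {V : Type} [Fintype V] :
    ∀ (n : ℕ) (G H : SimpleGraph V),
    (H.edgeSet \ G.edgeSet).ncard ≤ n → G ≤ H → G.IsAcyclic → H.Connected →
    ∃ T : SimpleGraph V, G ≤ T ∧ T ≤ H ∧ T.IsTree := by
  intro n
  induction n with
  | zero =>
    intro G H hcard hGH hG hH
    by_cases hc : G.Preconnected
    · exact ⟨G, le_refl G, hGH, ⟨(connected_iff _).mpr ⟨hc, hH.nonempty⟩, hG⟩⟩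
    · exfalso
      rw [SimpleGraph.Preconnected] at hc
      push_neg at hc
      obtain ⟨u, w, hur⟩ := hc
      obtain ⟨W⟩ := hH.preconnected u w
      obtain ⟨p, q, hpq, hp, hq, -, -⟩ :=
        EMaux.crossing (fun x => G.Reachable u x) W (Reachable.refl u) hur
      have hnr : ¬ G.Adj p q := fun hadj => hq (hp.trans hadj.reachable)
      have hmemHG : s(p, q) ∈ H.edgeSet \ G.edgeSet := ⟨hpq, hnr⟩
      have hpos : 0 < (H.edgeSet \ G.edgeSet).ncard :=
        (Set.ncard_pos (Set.toFinite _)).mpr ⟨_, hmemHG⟩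
      omega
  | succ n ih =>
    intro G H hcard hGH hG hH
    by_cases hc : G.Preconnected
    · exact ⟨G, le_refl G, hGH, ⟨(connected_iff _).mpr ⟨hc, hH.nonempty⟩, hG⟩⟩
    · rw [SimpleGraph.Preconnected] at hc
      push_neg at hc
      obtain ⟨u, w, hur⟩ := hc
      obtain ⟨W⟩ := hH.preconnected u w
      obtain ⟨p, q, hpq, hp, hq, -, -⟩ :=
        EMaux.crossing (fun x => G.Reachable u x) W (Reachable.refl u) hur
      have hnr : ¬ G.Reachable p q := fun hr => hq (hp.trans hr)
      have hGpq : ¬ G.Adj p q := fun hadj => hnr hadj.reachable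
      set G' := G ⊔ SimpleGraph.fromEdgeSet {s(p, q)} with hG'def
      have hG'H : G' ≤ H := by
        refine sup_le hGH ?_
        intro x y hxy
        rw [SimpleGraph.fromEdgeSet_adj] at hxy
        rcases Sym2.eq_iff.mp (Set.mem_singleton_iff.mp hxy.1) with ⟨rfl, rfl⟩ | ⟨rfl, rfl⟩
        · exact hpq
        · exact hpq.symm
      have hacy' : G'.IsAcyclic := acyclic_add_edge hG hnr hpq.ne
      have hGG' : G ≤ G' := le_sup_left
      have hssub : H.edgeSet \ G'.edgeSet ⊂ H.edgeSet \ G.edgeSet := by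
        constructor
        · intro e he
          exact ⟨he.1, fun hmem => he.2 (SimpleGraph.edgeSet_mono hGG' hmem)⟩
        · intro hsub
          have h1 : s(p, q) ∈ H.edgeSet \ G.edgeSet := ⟨hpq, hGpq⟩
          have h2 := hsub h1
          refine h2.2 ?_
          rw [SimpleGraph.mem_edgeSet]
          exact Or.inr (by rw [SimpleGraph.fromEdgeSet_adj]; exact ⟨rfl, hpq.ne⟩)
      have hlt : (H.edgeSet \ G'.edgeSet).ncard < (H.edgeSet \ G.edgeSet).ncard :=
        Set.ncard_lt_ncard hssub (Set.toFinite _)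
      obtain ⟨T, h1, h2, h3⟩ := ih G' H (by omega) hG'H hacy' hH
      exact ⟨T, le_trans hGG' h1, h2, h3⟩

lemma exists_partner {V : Type} {T : SimpleGraph V} (hT : T.IsTree) (r : V)
    (hr : ∃ w, T.Adj r w) :
    ∃ partner : V → V, (∀ v, T.Adj v (partner v)) ∧
      (∀ u w, T.Adj u w → partner u = w ∨ partner w = u) := by
  classical
  choose P hPpath hPuniq using hT.existsUnique_path r
  have hlen : ∀ v, v ≠ r → 1 ≤ (P v).length := by
    intro v hv
    by_contra hl
    push_neg at hl
    have h0 : (P v).length = 0 := by omega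
    exact hv (Walk.eq_of_length_eq_zero h0).symm
  set partner : V → V := fun v =>
    if hv : v = r then Classical.choose hr
    else (P v).getVert ((P v).length - 1) with hpartner
  have hadj : ∀ v, T.Adj v (partner v) := by
    intro v
    by_cases hv : v = r
    · subst hv
      simp only [hpartner, dif_pos]
      exact Classical.choose_spec hr
    · simp only [hpartner, dif_neg hv]
      have h1 := (P v).adj_getVert_succ (i := (P v).length - 1)
        (by have := hlen v hv; omega)
      rw [show (P v).length - 1 + 1 = (P v).length from by have := hlen v hv; omega,
        Walk.getVert_length] at h1
      exact h1.symm
  have hpen : ∀ (w u : V), T.Adj u w → w ≠ r → u ∈ (P w).support → partner w = u := by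
    intro w u hadj' hw hu
    have hdrop : ((P w).dropUntil u hu) = Walk.cons hadj' Walk.nil := by
      have h1 : ((P w).dropUntil u hu).IsPath := (hPpath w).dropUntil hu
      have h2 : (Walk.cons hadj' Walk.nil).IsPath := by
        rw [Walk.cons_isPath_iff]
        exact ⟨Walk.IsPath.nil, by simp [hadj'.ne]⟩
      exact (hT.existsUnique_path u w).unique h1 h2
    have hspec := (P w).take_spec hu
    rw [hdrop] at hspec
    obtain ⟨t, ht⟩ : ∃ t : T.Walk r u, t.append (Walk.cons hadj' Walk.nil) = P w :=
      ⟨(P w).takeUntil u hu, hspec⟩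
    simp only [hpartner, dif_neg hw]
    rw [← ht, Walk.getVert_append, Walk.length_append]
    have h2 : ¬ (t.length + (Walk.cons hadj' Walk.nil).length - 1 < t.length) := by
      simp only [Walk.length_cons, Walk.length_nil]
      omega
    rw [if_neg h2]
    have h3 : t.length + (Walk.cons hadj' Walk.nil).length - 1 - t.length = 0 := by
      simp only [Walk.length_cons, Walk.length_nil]
      omega
    rw [h3, Walk.getVert_zero]
  have hext : ∀ (w u : V), T.Adj w u → u ∉ (P w).support → partner u = w := by
    intro w u hadj' hu
    have hur : u ≠ r := by
      intro h
      subst h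
      exact hu ((P w).start_mem_support)
    have hRpath : ((P w).concat hadj').IsPath := by
      rw [Walk.isPath_def, Walk.support_concat]
      rw [List.nodup_append]
      refine ⟨(hPpath w).support_nodup, List.nodup_singleton u, ?_⟩
      intro x hx
      simp only [List.mem_singleton, forall_eq]
      intro hxu
      subst hxu
      exact hu hx
    have hRP : (P w).concat hadj' = P u := hPuniq u _ hRpath
    simp only [hpartner, dif_neg hur]
    rw [← hRP, Walk.concat_eq_append, Walk.getVert_append, Walk.length_append]
    have h2 : ¬ ((P w).length + (Walk.cons hadj' Walk.nil).length - 1 < (P w).length) := by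
      simp only [Walk.length_cons, Walk.length_nil]
      omega
    rw [if_neg h2]
    have h3 : (P w).length + (Walk.cons hadj' Walk.nil).length - 1 - (P w).length = 0 := by
      simp only [Walk.length_cons, Walk.length_nil]
      omega
    rw [h3, Walk.getVert_zero]
  refine ⟨partner, hadj, ?_⟩
  intro u w hadj'
  by_cases hw : w = r
  · left
    have hPr : P r = Walk.nil := (hPuniq r Walk.nil Walk.IsPath.nil).symm
    have h4 : T.Adj r u := by rw [← hw]; exact hadj'.symm
    have h5 : u ∉ (P r).support := by
      rw [hPr]
      simp only [Walk.support_nil, List.mem_singleton]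
      intro h6
      exact hadj'.ne (h6.trans hw.symm)
    rw [hw]
    exact hext r u h4 h5
  · by_cases hu : u ∈ (P w).support
    · exact Or.inr (hpen w u hadj' hw hu)
    · exact Or.inl (hext w u hadj'.symm hu)

end EMrev

end ReverseDir


theorem acyclic_to_pp {X : Type} [Fintype X] (a b : X → Fin 3)
    (hac : (pig a b).IsAcyclic) : PairPP 3 a b := by
  classical
  set K : SimpleGraph (Bool × Fin 3) :=
    { Adj := fun u v => u.1 ≠ v.1,
      symm := ⟨fun u v h => Ne.symm h⟩,
      loopless := ⟨fun u h => h rfl⟩ } with hK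
  have hKconn : K.Connected := by
    refine (connected_iff _).mpr ⟨?_, ⟨((false, 0) : Bool × Fin 3)⟩⟩
    intro u v
    by_cases h : u.1 = v.1
    · by_cases h2 : u = v
      · subst h2; exact Reachable.refl u
      · have hne2 : ∀ c : Bool, (!c) ≠ c := by decide
        have ha1 : K.Adj u (!u.1, 0) := by
          show u.1 ≠ !u.1
          exact (hne2 u.1).symm
        have ha2 : K.Adj (!u.1, 0) v := by
          show (!u.1) ≠ v.1
          rw [← h]
          exact hne2 u.1
        exact ha1.reachable.trans ha2.reachable
    · exact SimpleGraph.Adj.reachable h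
  have hpigK : pig a b ≤ K := by
    intro u v h
    have h2 := pig_adj_flip h
    show u.1 ≠ v.1
    rw [h2]
    cases u.1 <;> simp
  obtain ⟨T, hpigT, hTK, hTree⟩ := EMrev.exists_tree_between
    ((K.edgeSet \ (pig a b).edgeSet).ncard) (pig a b) K le_rfl hpigK hac hKconn
  have hr : ∃ w, T.Adj ((false, 0) : Bool × Fin 3) w := by
    obtain ⟨W⟩ := hTree.isConnected.preconnected ((false, 0) : Bool × Fin 3) (true, 0)
    have hnn : ¬ W.Nil := Walk.not_nil_of_ne (by simp)
    exact ⟨W.getVert 1, Walk.adj_snd hnn⟩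
  obtain ⟨pt, hptadj, hptcov⟩ := EMrev.exists_partner hTree _ hr
  have hflip : ∀ v : Bool × Fin 3, (pt v).1 ≠ v.1 := fun v => (hTK (hptadj v)).symm
  set ℓ : Bool × Fin 3 → Fin 2 → Fin 3 := fun v =>
    if v.1 = false then ![v.2, (pt v).2] else ![(pt v).2, v.2] with hℓ
  refine ⟨Bool × Fin 3, inferInstance, T, ℓ, hTree, ?_, ?_⟩
  · intro x
    have hedge : (pig a b).Adj (false, a x) (true, b x) :=
      Or.inl ⟨rfl, rfl, x, rfl, rfl⟩
    rcases hptcov _ _ (hpigT hedge) with hcv | hcv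
    · refine ⟨(false, a x), ?_⟩
      intro f
      fin_cases f
      · simp [hℓ]
      · simp [hℓ, hcv]
    · refine ⟨(true, b x), ?_⟩
      intro f
      fin_cases f
      · simp [hℓ, hcv]
      · simp [hℓ]
  · intro f s
    fin_cases f
    · -- character a
      have hcen : ((false, s) : Bool × Fin 3) ∈ {v : Bool × Fin 3 | ℓ v 0 = s} := by
        simp [hℓ]
      have hmem : ∀ v : Bool × Fin 3, ℓ v 0 = s → v ≠ (false, s) →
          T.Adj v (false, s) := by
        intro v hv hne
        cases hb : v.1 with
        | false =>
          have h1 : v.2 = s := by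
            rw [hℓ] at hv
            simpa [hb] using hv
          exact absurd (Prod.ext hb h1) hne
        | true =>
          have h1 : (pt v).2 = s := by
            rw [hℓ] at hv
            simpa [hb] using hv
          have h3 := hflip v
          rw [hb] at h3
          have h2 : (pt v).1 = false := Bool.eq_false_iff.mpr h3
          have h4 : pt v = (false, s) := Prod.ext h2 h1
          have h5 := hptadj v
          rwa [h4] at h5
      have key : ∀ (w : Bool × Fin 3) (hw : w ∈ {v : Bool × Fin 3 | ℓ v 0 = s}),
          (T.induce {v : Bool × Fin 3 | ℓ v 0 = s}).Reachable ⟨w, hw⟩ ⟨(false, s), hcen⟩ := by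
        intro w hw
        by_cases hne : w = (false, s)
        · subst hne
          exact Reachable.refl _
        · exact SimpleGraph.Adj.reachable (hmem w hw hne)
      intro u v
      exact (key u.1 u.2).trans (key v.1 v.2).symm
    · -- character b
      have hcen : ((true, s) : Bool × Fin 3) ∈ {v : Bool × Fin 3 | ℓ v 1 = s} := by
        simp [hℓ]
      have hmem : ∀ v : Bool × Fin 3, ℓ v 1 = s → v ≠ (true, s) →
          T.Adj v (true, s) := by
        intro v hv hne
        cases hb : v.1 with
        | true =>
          have h1 : v.2 = s := by
            rw [hℓ] at hv
            simpa [hb] using hv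
          exact absurd (Prod.ext hb h1) hne
        | false =>
          have h1 : (pt v).2 = s := by
            rw [hℓ] at hv
            simpa [hb] using hv
          have h3 := hflip v
          rw [hb] at h3
          have h2 : (pt v).1 = true := by
            cases h4 : (pt v).1
            · exact absurd h4 h3
            · rfl
          have h4 : pt v = (true, s) := Prod.ext h2 h1
          have h5 := hptadj v
          rwa [h4] at h5
      have key : ∀ (w : Bool × Fin 3) (hw : w ∈ {v : Bool × Fin 3 | ℓ v 1 = s}),
          (T.induce {v : Bool × Fin 3 | ℓ v 1 = s}).Reachable ⟨w, hw⟩ ⟨(true, s), hcen⟩ := by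
        intro w hw
        by_cases hne : w = (true, s)
        · subst hne
          exact Reachable.refl _
        · exact SimpleGraph.Adj.reachable (hmem w hw hne)
      intro u v
      exact (key u.1 u.2).trans (key v.1 v.2).symm


/-- Estabrook–McMorris: two 3-state characters have a perfect phylogeny iff
their partition intersection graph is acyclic. -/
theorem pair_pp_iff_pig_acyclic {X : Type} [Fintype X] (a b : X → Fin 3) :
    PairPP 3 a b ↔ (pig a b).IsAcyclic :=
  ⟨pp_to_acyclic, acyclic_to_pp a b⟩
end

section
/- (Dress–Steel) A finite family M of 3-state characters on a finite set of taxa X has a perfect phylogeny if and only if there exists a set C of binarized characters of M such that (i) every two characters in C have a perfect phylogeny (as a pair of 2-state characters), and (ii) for each character c of M, at least two of the three binarized characters c(0), c(1), c(2) belong to C. -/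
open SimpleGraph

section
variable {V : Type*} {G : SimpleGraph V} {S : Set V}

lemma aux_walk_of_induce {V : Type*} {G : SimpleGraph V} {S : Set V} :
    ∀ {a b : ↥S} (_ : (G.induce S).Walk a b),
      ∃ q : G.Walk a.1 b.1, ∀ w ∈ q.support, w ∈ S := by
  intro a b p
  induction p with
  | @nil u => exact ⟨Walk.nil, by rintro w hw; simp at hw; subst hw; exact u.2⟩
  | @cons x y z h p ih =>
    obtain ⟨q, hq⟩ := ih
    refine ⟨Walk.cons (by exact h) q, ?_⟩
    intro w hw
    rcases (Walk.mem_support_iff _).1 hw with rfl | hw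
    · exact x.2
    · exact hq w hw

lemma aux_reach_of_walk {V : Type*} {G : SimpleGraph V} {S : Set V} :
    ∀ {a b : V} (q : G.Walk a b) (ha : a ∈ S) (hb : b ∈ S),
      (∀ w ∈ q.support, w ∈ S) → (G.induce S).Reachable ⟨a, ha⟩ ⟨b, hb⟩ := by
  intro a b q
  induction q with
  | nil => intro ha hb _; exact Reachable.refl _
  | @cons a c b h q ih =>
    intro ha hb hsup
    have hc : c ∈ S := hsup c (by simp)
    have hadj : (G.induce S).Adj ⟨a, ha⟩ ⟨c, hc⟩ := by simpa using h
    exact hadj.reachable.trans (ih hc hb (fun w hw => hsup w (by simp [hw])))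

lemma aux_first_cross {V : Type*} {G : SimpleGraph V} {S : Set V} :
    ∀ {a b : V} (q : G.Walk a b), a ∈ S → b ∉ S →
      ∃ u v, G.Adj u v ∧ u ∈ S ∧ v ∉ S ∧ u ∈ q.support ∧ v ∈ q.support := by
  intro a b q
  induction q with
  | nil => intro ha hb; exact absurd ha hb
  | @cons a c b h q ih =>
    intro ha hb
    by_cases hc : c ∈ S
    · obtain ⟨u, v, h1, h2, h3, h4, h5⟩ := ih hc hb
      exact ⟨u, v, h1, h2, h3, by simp [h4], by simp [h5]⟩
    · exact ⟨a, c, h, ha, hc, by simp, by simp⟩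

lemma aux_first_cross_edge :
    ∀ {a b : V} (q : G.Walk a b), a ∈ S → b ∉ S →
      ∃ u v, G.Adj u v ∧ u ∈ S ∧ v ∉ S ∧ s(u, v) ∈ q.edges := by
  intro a b q
  induction q with
  | nil => intro ha hb; exact absurd ha hb
  | @cons a c b h q ih =>
    intro ha hb
    by_cases hc : c ∈ S
    · obtain ⟨u, v, h1, h2, h3, h4⟩ := ih hc hb
      exact ⟨u, v, h1, h2, h3, by simp [h4]⟩
    · exact ⟨a, c, h, ha, hc, by simp⟩

lemma aux_walk_in {V : Type*} {G : SimpleGraph V} {S : Set V}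
    (hS : (G.induce S).Preconnected) {a b : V} (ha : a ∈ S) (hb : b ∈ S) :
    ∃ q : G.Walk a b, ∀ w ∈ q.support, w ∈ S := by
  obtain ⟨p⟩ := hS ⟨a, ha⟩ ⟨b, hb⟩
  exact aux_walk_of_induce p

lemma aux_unique_cross (hac : G.IsAcyclic) {S' : Set V}
    (hco : ∀ v, v ∈ S' ↔ v ∉ S)
    (hS : (G.induce S).Preconnected) (hS' : (G.induce S').Preconnected)
    {u1 v1 u2 v2 : V} (h1 : G.Adj u1 v1) (hu1 : u1 ∈ S) (hv1 : v1 ∈ S')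
    (h2 : G.Adj u2 v2) (hu2 : u2 ∈ S) (hv2 : v2 ∈ S') :
    s(u1, v1) = s(u2, v2) := by
  have hbr := (isAcyclic_iff_forall_adj_isBridge.1 hac) h1
  rw [isBridge_iff_adj_and_forall_walk_mem_edges] at hbr
  obtain ⟨q1, hq1⟩ := aux_walk_in hS hu1 hu2
  obtain ⟨q2, hq2⟩ := aux_walk_in hS' hv2 hv1
  have hmem := hbr (q1.append (Walk.cons h2 q2))
  rw [Walk.edges_append, List.mem_append] at hmem
  rcases hmem with hm | hm
  · exfalso
    have : v1 ∈ q1.support := by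
      have : s(v1, u1) ∈ q1.edges := by rwa [Sym2.eq_swap] at hm
      exact q1.fst_mem_support_of_mem_edges this
    exact ((hco v1).1 hv1) (hq1 _ this)
  · rw [Walk.edges_cons, List.mem_cons] at hm
    rcases hm with hm | hm
    · exact hm
    · exfalso
      have : u1 ∈ q2.support := Walk.fst_mem_support_of_mem_edges q2 hm
      exact ((hco u1).1 (hq2 _ this)) hu1

end

lemma aux_four_gamete {X : Type} [Fintype X] {a b : X → Fin 2}
    (h : PairPP 2 a b) {s s' t t' : Fin 2} (hs : s ≠ s') (ht : t ≠ t')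
    {x00 x01 x10 x11 : X}
    (h00a : a x00 = s) (h00b : b x00 = t) (h01a : a x01 = s) (h01b : b x01 = t')
    (h10a : a x10 = s') (h10b : b x10 = t) (h11a : a x11 = s') (h11b : b x11 = t') :
    False := by
  have hfin : ∀ (p q u : Fin 2), p ≠ q → (u = q ↔ ¬ u = p) := by decide
  have hfin2 : ∀ (p q u : Fin 2), p ≠ q → (u = p ∨ u = q) := by decide
  obtain ⟨V, _, T, ℓ, htree, htaxa, hconn⟩ := h
  obtain ⟨w00, hw00⟩ := htaxa x00
  obtain ⟨w01, hw01⟩ := htaxa x01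
  obtain ⟨w10, hw10⟩ := htaxa x10
  obtain ⟨w11, hw11⟩ := htaxa x11
  have e00a : ℓ w00 0 = s := by simpa [h00a] using hw00 0
  have e00b : ℓ w00 1 = t := by simpa [h00b] using hw00 1
  have e01a : ℓ w01 0 = s := by simpa [h01a] using hw01 0
  have e01b : ℓ w01 1 = t' := by simpa [h01b] using hw01 1
  have e10a : ℓ w10 0 = s' := by simpa [h10a] using hw10 0
  have e10b : ℓ w10 1 = t := by simpa [h10b] using hw10 1
  have e11a : ℓ w11 0 = s' := by simpa [h11a] using hw11 0
  have e11b : ℓ w11 1 = t' := by simpa [h11b] using hw11 1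
  set SA : Set V := {v | ℓ v 0 = s} with hSAdef
  set SA' : Set V := {v | ℓ v 0 = s'} with hSA'def
  set SB : Set V := {v | ℓ v 1 = t} with hSBdef
  set SB' : Set V := {v | ℓ v 1 = t'} with hSB'def
  have hcoA : ∀ v, v ∈ SA' ↔ v ∉ SA := fun v => hfin s s' _ hs
  have hcoB : ∀ v, v ∈ SB' ↔ v ∉ SB := fun v => hfin t t' _ ht
  have hA : (T.induce SA).Preconnected := hconn 0 s
  have hA' : (T.induce SA').Preconnected := hconn 0 s'
  have hB : (T.induce SB).Preconnected := hconn 1 t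
  have hB' : (T.induce SB').Preconnected := hconn 1 t'
  have hac := htree.IsAcyclic
  -- a crossing edge for the B split
  obtain ⟨q0⟩ := htree.isConnected.preconnected w00 w01
  obtain ⟨uB, vB, hadjB, huB, hvB0, -, -⟩ :=
    aux_first_cross (S := SB) q0 (e00b : w00 ∈ SB)
      (fun hh => ht ((e01b.symm.trans hh).symm))
  have hvB : vB ∈ SB' := (hcoB vB).2 hvB0
  rcases hfin2 s s' (ℓ uB 0) hs with huBs | huBs' <;>
    rcases hfin2 s s' (ℓ vB 0) hs with hvBs | hvBs'
  · -- both ends of eB in SA : walk w10 → w11 inside SA'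
    obtain ⟨q, hq⟩ := aux_walk_in hA' (e10a : w10 ∈ SA') (e11a : w11 ∈ SA')
    obtain ⟨a1, b1, hadj1, ha1, hb10, ha1s, hb1s⟩ :=
      aux_first_cross (S := SB) q (e10b : w10 ∈ SB) (by show ¬ ℓ w11 1 = t; rw [← hfin t t' _ ht]; exact e11b)
    have heq := aux_unique_cross hac hcoB hB hB' hadj1 ha1 ((hcoB b1).2 hb10) hadjB huB hvB
    rcases Sym2.eq_iff.1 heq with ⟨h1, h2⟩ | ⟨h1, h2⟩
    · have hx : ℓ uB 0 = s' := h1 ▸ hq a1 ha1s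
      exact hs (huBs.symm.trans hx)
    · have hx : ℓ uB 0 = s' := h2 ▸ hq b1 hb1s
      exact hs (huBs.symm.trans hx)
  · -- uB ∈ SA, vB ∈ SA' : walk uB → w10 inside SB
    obtain ⟨q, hq⟩ := aux_walk_in hB (huB : uB ∈ SB) (e10b : w10 ∈ SB)
    obtain ⟨a1, b1, hadj1, ha1, hb10, ha1s, hb1s⟩ :=
      aux_first_cross (S := SA) q (huBs : uB ∈ SA) (by show ¬ ℓ w10 0 = s; rw [← hfin s s' _ hs]; exact e10a)
    have heq := aux_unique_cross hac hcoA hA hA' hadj1 ha1 ((hcoA b1).2 hb10) hadjB huBs ((hcoA vB).2 (by show ¬ ℓ vB 0 = s; rw [← hfin s s' _ hs]; exact hvBs'))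
    rcases Sym2.eq_iff.1 heq with ⟨h1, h2⟩ | ⟨h1, h2⟩
    · have : ℓ vB 1 = t := h2 ▸ hq b1 hb1s
      exact ht (this.symm.trans hvB)
    · have : ℓ vB 1 = t := h1 ▸ hq a1 ha1s
      exact ht (this.symm.trans hvB)
  · -- uB ∈ SA', vB ∈ SA : walk vB → w11 inside SB'
    obtain ⟨q, hq⟩ := aux_walk_in hB' (hvB : vB ∈ SB') (e11b : w11 ∈ SB')
    obtain ⟨a1, b1, hadj1, ha1, hb10, ha1s, hb1s⟩ :=
      aux_first_cross (S := SA) q (hvBs : vB ∈ SA) (by show ¬ ℓ w11 0 = s; rw [← hfin s s' _ hs]; exact e11a)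
    have heq := aux_unique_cross hac hcoA hA hA' hadj1 ha1 ((hcoA b1).2 hb10) hadjB.symm hvBs ((hcoA uB).2 (by show ¬ ℓ uB 0 = s; rw [← hfin s s' _ hs]; exact huBs'))
    rcases Sym2.eq_iff.1 heq with ⟨h1, h2⟩ | ⟨h1, h2⟩
    · have : ℓ uB 1 = t' := h2 ▸ hq b1 hb1s
      exact ht (huB.symm.trans this)
    · have : ℓ uB 1 = t' := h1 ▸ hq a1 ha1s
      exact ht (huB.symm.trans this)
  · -- both ends of eB in SA' : walk w00 → w01 inside SA
    obtain ⟨q, hq⟩ := aux_walk_in hA (e00a : w00 ∈ SA) (e01a : w01 ∈ SA)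
    obtain ⟨a1, b1, hadj1, ha1, hb10, ha1s, hb1s⟩ :=
      aux_first_cross (S := SB) q (e00b : w00 ∈ SB) (by show ¬ ℓ w01 1 = t; rw [← hfin t t' _ ht]; exact e01b)
    have heq := aux_unique_cross hac hcoB hB hB' hadj1 ha1 ((hcoB b1).2 hb10) hadjB huB hvB
    rcases Sym2.eq_iff.1 heq with ⟨h1, h2⟩ | ⟨h1, h2⟩
    · have : ℓ uB 0 = s := h1 ▸ hq a1 ha1s
      exact hs (this.symm.trans huBs')
    · have : ℓ uB 0 = s := h2 ▸ hq b1 hb1s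
      exact hs (this.symm.trans huBs')

lemma aux_laminar {X : Type} [Fintype X] [DecidableEq X] (x0 : X) {G : Type} [Fintype G]
    (A : G → Finset X) (hx0 : ∀ g, x0 ∉ A g)
    (hlam : ∀ g g', A g ⊆ A g' ∨ A g' ⊆ A g ∨ ∀ x, x ∈ A g → x ∈ A g' → False) :
    ∃ (V : Type) (_ : Fintype V) (T : SimpleGraph V) (σ : V → G → Prop) (τ : X → V),
      T.IsTree ∧ (∀ x g, σ (τ x) g ↔ x ∈ A g) ∧
      (∀ g, (T.induce {v | σ v g}).Preconnected) ∧
      (∀ g, (T.induce {v | ¬ σ v g}).Preconnected) ∧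
      (∀ g g', (T.induce {v | σ v g ∧ ¬ σ v g'}).Preconnected) ∧
      (∀ g g', (T.induce {v | ¬ σ v g ∧ ¬ σ v g'}).Preconnected) ∧
      (∀ g g', A g' ⊆ A g → (T.induce {v | σ v g ∧ σ v g'}).Preconnected) := by
  classical
  set VS : Finset (Finset X) :=
    insert Finset.univ ((Finset.univ.image A).filter (fun s => s.Nonempty)) with hVS
  have hunivmem : Finset.univ ∈ VS := Finset.mem_insert_self _ _
  have hmem : ∀ B ∈ VS, B = Finset.univ ∨ ∃ g, B = A g := by
    intro B hB
    rcases Finset.mem_insert.1 hB with h | h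
    · exact Or.inl h
    · obtain ⟨g, -, rfl⟩ := Finset.mem_image.1 (Finset.mem_filter.1 h).1
      exact Or.inr ⟨g, rfl⟩
  have hAmem : ∀ g, (A g).Nonempty → A g ∈ VS := by
    intro g hg
    exact Finset.mem_insert_of_mem (Finset.mem_filter.2
      ⟨Finset.mem_image.2 ⟨g, Finset.mem_univ _, rfl⟩, hg⟩)
  have hne : ∀ B ∈ VS, B.Nonempty := by
    intro B hB
    rcases Finset.mem_insert.1 hB with h | h
    · exact h ▸ ⟨x0, Finset.mem_univ _⟩
    · exact (Finset.mem_filter.1 h).2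
  have hAneuniv : ∀ g, A g ≠ Finset.univ := fun g h => hx0 g (h ▸ Finset.mem_univ x0)
  have hnuniv : ∀ s : Finset X, ¬ Finset.univ ⊂ s :=
    fun s hh => hh.not_subset (Finset.subset_univ s)
  have hcomp : ∀ B ∈ VS, ∀ C ∈ VS, (∃ x, x ∈ B ∧ x ∈ C) → B ⊆ C ∨ C ⊆ B := by
    intro B hB C hC hx
    rcases hmem B hB with rfl | ⟨g, rfl⟩
    · exact Or.inr (Finset.subset_univ _)
    rcases hmem C hC with rfl | ⟨g', rfl⟩
    · exact Or.inl (Finset.subset_univ _)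
    rcases hlam g g' with h | h | h
    · exact Or.inl h
    · exact Or.inr h
    · obtain ⟨x, hx1, hx2⟩ := hx; exact absurd (h x hx1 hx2) not_false
  have hpar0 : ∀ B : ↥VS, B.1 ≠ Finset.univ →
      ∃ P : ↥VS, B.1 ⊂ P.1 ∧ ∀ Q : ↥VS, B.1 ⊂ Q.1 → P.1 ⊆ Q.1 := by
    intro B hB
    have hfil : (VS.filter (fun P => B.1 ⊂ P)).Nonempty :=
      ⟨Finset.univ, Finset.mem_filter.2 ⟨hunivmem,
        Finset.ssubset_iff_subset_ne.2 ⟨Finset.subset_univ _, hB⟩⟩⟩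
    obtain ⟨P, hPmem, hPmin⟩ := Finset.exists_min_image _ (fun P => P.card) hfil
    have hPVS := (Finset.mem_filter.1 hPmem).1
    have hBP := (Finset.mem_filter.1 hPmem).2
    refine ⟨⟨P, hPVS⟩, hBP, ?_⟩
    intro Q hBQ
    obtain ⟨x, hxB⟩ := hne B.1 B.2
    have hcard := hPmin Q.1 (Finset.mem_filter.2 ⟨Q.2, hBQ⟩)
    rcases hcomp P hPVS Q.1 Q.2 ⟨x, hBP.subset hxB, hBQ.subset hxB⟩ with h | h
    · exact h
    · rw [Finset.eq_of_subset_of_card_le h hcard]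
  let par : ↥VS → ↥VS := fun B =>
    if h : B.1 = Finset.univ then B else (hpar0 B h).choose
  have hpar1 : ∀ B : ↥VS, B.1 ≠ Finset.univ → B.1 ⊂ (par B).1 := by
    intro B h; simp only [par, dif_neg h]; exact (hpar0 B h).choose_spec.1
  have hpar2 : ∀ (B : ↥VS), B.1 ≠ Finset.univ → ∀ Q : ↥VS, B.1 ⊂ Q.1 → (par B).1 ⊆ Q.1 := by
    intro B h; simp only [par, dif_neg h]; exact (hpar0 B h).choose_spec.2
  let T : SimpleGraph ↥VS :=
    { Adj := fun B C => B ≠ C ∧ (par B = C ∨ par C = B)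
      symm := by constructor; rintro B C ⟨h1, h2⟩; exact ⟨h1.symm, h2.symm⟩
      loopless := by constructor; rintro B ⟨h1, -⟩; exact h1 rfl }
  have hadjT : ∀ B C : ↥VS, T.Adj B C ↔ B ≠ C ∧ (par B = C ∨ par C = B) := fun _ _ => Iff.rfl
  have hadj_par : ∀ B : ↥VS, B.1 ≠ Finset.univ → T.Adj B (par B) := by
    intro B h
    exact ⟨fun e => (hpar1 B h).ne (congrArg Subtype.val e), Or.inl rfl⟩
  let R : ↥VS := ⟨Finset.univ, hunivmem⟩
  -- walking up to a root
  have hup : ∀ (P : ↥VS → Prop) (Rt : ↥VS), P Rt →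
      (∀ B, P B → B ≠ Rt → B.1 ⊆ Rt.1 ∧ P (par B)) →
      ∀ B, P B → ∃ q : T.Walk B Rt, ∀ w ∈ q.support, P w := by
    intro P Rt hPRt hcl
    have main : ∀ (n : ℕ) (B), Rt.1.card - B.1.card ≤ n → P B →
        ∃ q : T.Walk B Rt, ∀ w ∈ q.support, P w := by
      intro n
      induction n with
      | zero =>
        intro B hn hPB
        by_cases hBR : B = Rt
        · subst hBR; exact ⟨Walk.nil, by intro w hw; simp at hw; subst hw; exact hPB⟩
        · exfalso
          have hsub := (hcl B hPB hBR).1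
          have : B.1 = Rt.1 := Finset.eq_of_subset_of_card_le hsub (by omega)
          exact hBR (Subtype.ext this)
      | succ n ih =>
        intro B hn hPB
        by_cases hBR : B = Rt
        · subst hBR; exact ⟨Walk.nil, by intro w hw; simp at hw; subst hw; exact hPB⟩
        have hsub := hcl B hPB hBR
        have hBne : B.1 ≠ Rt.1 := fun e => hBR (Subtype.ext e)
        have hss : B.1 ⊂ Rt.1 := Finset.ssubset_iff_subset_ne.2 ⟨hsub.1, hBne⟩
        have hBnuniv : B.1 ≠ Finset.univ := by
          intro e; exact hnuniv Rt.1 (e ▸ hss)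
        have hcard1 : B.1.card < (par B).1.card := Finset.card_lt_card (hpar1 B hBnuniv)
        by_cases hPR : par B = Rt
        · refine ⟨Walk.cons (hPR ▸ hadj_par B hBnuniv) Walk.nil, ?_⟩
          intro w hw
          rcases (Walk.mem_support_iff _).1 hw with rfl | hw
          · exact hPB
          · simp at hw; subst hw; exact hPRt
        · have hsub2 := hcl (par B) hsub.2 hPR
          have hcard2 : (par B).1.card ≤ Rt.1.card := Finset.card_le_card hsub2.1
          obtain ⟨q, hq⟩ := ih (par B) (by omega) hsub.2
          refine ⟨Walk.cons (hadj_par B hBnuniv) q, ?_⟩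
          intro w hw
          rcases (Walk.mem_support_iff _).1 hw with rfl | hw
          · exact hPB
          · exact hq w hw
    exact fun B => main (Rt.1.card - B.1.card) B le_rfl
  -- connectivity of T
  have hpreT : T.Preconnected := by
    intro B C
    obtain ⟨q1, -⟩ := hup (fun _ => True) R trivial
      (fun B _ _ => ⟨Finset.subset_univ _, trivial⟩) B trivial
    obtain ⟨q2, -⟩ := hup (fun _ => True) R trivial
      (fun B _ _ => ⟨Finset.subset_univ _, trivial⟩) C trivial
    exact (Walk.reachable q1).trans (Walk.reachable q2).symm
  -- acyclicity
  have hbridge : ∀ u w : ↥VS, T.Adj u w → par u = w → T.IsBridge s(u, w) := by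
    intro u w hadj hpu
    rw [isBridge_iff_adj_and_forall_walk_mem_edges]
    intro p
    by_contra hnp
    have hunuiv : u.1 ≠ Finset.univ := by
      intro e
      apply hadj.1
      have : par u = u := by simp only [par, dif_pos e]
      exact this.symm.trans hpu
    have huD : u ∈ {C : ↥VS | C.1 ⊆ u.1} := Finset.Subset.refl _
    have hwD : w ∉ {C : ↥VS | C.1 ⊆ u.1} := by
      intro hh
      exact (hpar1 u hunuiv).not_subset (hpu ▸ hh)
    obtain ⟨a1, b1, hadj1, ha1, hb1, hedge⟩ :=
      aux_first_cross_edge (S := {C : ↥VS | C.1 ⊆ u.1}) p huD hwD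
    rcases hadj1.2 with hpa | hpb
    · by_cases hau : a1 = u
      · subst hau
        rw [hpa.symm.trans hpu] at hedge
        exact hnp hedge
      · apply hb1
        have hss : a1.1 ⊂ u.1 := Finset.ssubset_iff_subset_ne.2
          ⟨ha1, fun e => hau (Subtype.ext e)⟩
        have hanuniv : a1.1 ≠ Finset.univ := fun e => hnuniv u.1 (e ▸ hss)
        exact hpa ▸ hpar2 a1 hanuniv u hss
    · apply hb1
      have hbnuniv : b1.1 ≠ Finset.univ := by
        intro e
        apply hadj1.1
        have : par b1 = b1 := by simp only [par, dif_pos e]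
        exact ((this.symm.trans hpb)).symm
      exact Finset.Subset.trans (hpar1 b1 hbnuniv).subset (hpb ▸ ha1 : (par b1).1 ⊆ u.1)
  have htree : T.IsTree := by
    constructor
    · have : Nonempty ↥VS := ⟨R⟩
      exact ⟨hpreT⟩
    · rw [isAcyclic_iff_forall_adj_isBridge]
      intro u w hadj
      rcases hadj.2 with h | h
      · exact hbridge u w hadj h
      · rw [Sym2.eq_swap]; exact hbridge w u hadj.symm h
  -- the labeling and taxa map
  have htau : ∀ x : X, ∃ B : ↥VS, x ∈ B.1 ∧ ∀ g, B.1 ⊆ A g ↔ x ∈ A g := by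
    intro x
    have hfil : (VS.filter (fun B => x ∈ B)).Nonempty :=
      ⟨Finset.univ, Finset.mem_filter.2 ⟨hunivmem, Finset.mem_univ _⟩⟩
    obtain ⟨B, hBmem, hBmin⟩ := Finset.exists_min_image _ (fun B => B.card) hfil
    have hBVS := (Finset.mem_filter.1 hBmem).1
    have hxB := (Finset.mem_filter.1 hBmem).2
    refine ⟨⟨B, hBVS⟩, hxB, fun g => ⟨fun h => h hxB, fun h => ?_⟩⟩
    have hAVS : A g ∈ VS := hAmem g ⟨x, h⟩
    have hcard := hBmin (A g) (Finset.mem_filter.2 ⟨hAVS, h⟩)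
    rcases hcomp B hBVS (A g) hAVS ⟨x, hxB, h⟩ with hc | hc
    · exact hc
    · rw [Finset.eq_of_subset_of_card_le hc hcard]
  choose τ hτ1 hτ2 using htau
  -- the master connectivity lemma
  have hconnP : ∀ (P : ↥VS → Prop) (Rt : ↥VS), P Rt →
      (∀ B, P B → B ≠ Rt → B.1 ⊆ Rt.1 ∧ P (par B)) →
      ∀ u v : ↥{v : ↥VS | P v}, (T.induce {v : ↥VS | P v}).Reachable u v := by
    intro P Rt hPRt hcl u v
    obtain ⟨q1, hq1⟩ := hup P Rt hPRt hcl u.1 u.2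
    obtain ⟨q2, hq2⟩ := hup P Rt hPRt hcl v.1 v.2
    exact (aux_reach_of_walk q1 u.2 hPRt hq1).trans (aux_reach_of_walk q2 v.2 hPRt hq2).symm
  refine ⟨↥VS, inferInstance, T, fun B g => B.1 ⊆ A g, τ, htree, hτ2, ?_, ?_, ?_, ?_, ?_⟩
  · -- c1 : down-sets
    intro g u v
    have hAg : (A g).Nonempty := (hne u.1.1 u.1.2).mono u.2
    refine hconnP _ ⟨A g, hAmem g hAg⟩ (Finset.Subset.refl _) ?_ u v
    intro B hB hBR
    refine ⟨hB, ?_⟩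
    have hss : B.1 ⊂ A g := Finset.ssubset_iff_subset_ne.2
      ⟨hB, fun e => hBR (Subtype.ext e)⟩
    have hBnuniv : B.1 ≠ Finset.univ := fun e => hnuniv (A g) (e ▸ hss)
    exact hpar2 B hBnuniv ⟨A g, hAmem g hAg⟩ hss
  · -- c2 : up-sets
    intro g u v
    refine hconnP _ R (fun h => hx0 g (h (Finset.mem_univ x0))) ?_ u v
    intro B hB hBR
    refine ⟨Finset.subset_univ _, ?_⟩
    have hBnuniv : B.1 ≠ Finset.univ := fun e => hBR (Subtype.ext e)
    exact fun h => hB (Finset.Subset.trans (hpar1 B hBnuniv).subset h)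
  · -- c3 : down ∩ up
    intro g g' u v
    have hAg : (A g).Nonempty := (hne u.1.1 u.1.2).mono u.2.1
    have hroot : A g ⊆ A g ∧ ¬ A g ⊆ A g' :=
      ⟨Finset.Subset.refl _, fun h => u.2.2 (Finset.Subset.trans u.2.1 h)⟩
    refine hconnP _ ⟨A g, hAmem g hAg⟩ hroot ?_ u v
    rintro B ⟨hB1, hB2⟩ hBR
    have hss : B.1 ⊂ A g := Finset.ssubset_iff_subset_ne.2
      ⟨hB1, fun e => hBR (Subtype.ext e)⟩
    have hBnuniv : B.1 ≠ Finset.univ := fun e => hnuniv (A g) (e ▸ hss)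
    refine ⟨hB1, hpar2 B hBnuniv ⟨A g, hAmem g hAg⟩ hss, ?_⟩
    exact fun h => hB2 (Finset.Subset.trans (hpar1 B hBnuniv).subset h)
  · -- c4 : up ∩ up
    intro g g' u v
    refine hconnP _ R ⟨fun h => hx0 g (h (Finset.mem_univ x0)),
      fun h => hx0 g' (h (Finset.mem_univ x0))⟩ ?_ u v
    rintro B ⟨hB1, hB2⟩ hBR
    have hBnuniv : B.1 ≠ Finset.univ := fun e => hBR (Subtype.ext e)
    refine ⟨Finset.subset_univ _, ?_, ?_⟩
    · exact fun h => hB1 (Finset.Subset.trans (hpar1 B hBnuniv).subset h)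
    · exact fun h => hB2 (Finset.Subset.trans (hpar1 B hBnuniv).subset h)
  · -- c5 : down ∩ down (nested)
    intro g g' hsub u v
    have hAg' : (A g').Nonempty := (hne u.1.1 u.1.2).mono u.2.2
    refine hconnP _ ⟨A g', hAmem g' hAg'⟩ ⟨hsub, Finset.Subset.refl _⟩ ?_ u v
    rintro B ⟨hB1, hB2⟩ hBR
    have hss : B.1 ⊂ A g' := Finset.ssubset_iff_subset_ne.2
      ⟨hB2, fun e => hBR (Subtype.ext e)⟩
    have hBnuniv : B.1 ≠ Finset.univ := fun e => hnuniv (A g') (e ▸ hss)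
    have hp := hpar2 B hBnuniv ⟨A g', hAmem g' hAg'⟩ hss
    exact ⟨hB2, Finset.Subset.trans hp hsub, hp⟩

lemma aux_forward {X F : Type} [Fintype X] [Fintype F] (chars : F → X → Fin 3)
    (h : PerfectPhylogeny 3 chars) :
    ∃ C : Finset (F × Fin 3),
      (∀ p ∈ C, ∀ q ∈ C, PairPP 2 (bin (chars p.1) p.2) (bin (chars q.1) q.2)) ∧
      (∀ f : F, ∃ i j : Fin 3, i ≠ j ∧ (f, i) ∈ C ∧ (f, j) ∈ C) := by
  classical
  obtain ⟨V, hV, T, ℓ, htree, htaxa, hconn⟩ := h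
  have htrans : ∀ (S1 S2 : Set V), (∀ v, v ∈ S1 ↔ v ∈ S2) →
      (T.induce S2).Preconnected → (T.induce S1).Preconnected := by
    intro S1 S2 hh hp
    rw [Set.ext hh]
    exact hp
  refine ⟨Finset.univ.filter
    (fun p : F × Fin 3 => (T.induce {v | ¬ ℓ v p.1 = p.2}).Preconnected), ?_, ?_⟩
  · -- pairwise compatibility
    intro p hp q hq
    have hgp : (T.induce {v | ¬ ℓ v p.1 = p.2}).Preconnected := (Finset.mem_filter.1 hp).2
    have hgq : (T.induce {v | ¬ ℓ v q.1 = q.2}).Preconnected := (Finset.mem_filter.1 hq).2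
    refine ⟨V, hV, T,
      fun v => ![if ℓ v p.1 = p.2 then 0 else 1, if ℓ v q.1 = q.2 then 0 else 1],
      htree, ?_, ?_⟩
    · intro x
      obtain ⟨v, hv⟩ := htaxa x
      refine ⟨v, fun g => ?_⟩
      fin_cases g
      · simp [bin, hv p.1]
      · simp [bin, hv q.1]
    · intro g s
      fin_cases g <;> fin_cases s
      · refine htrans _ {v | ℓ v p.1 = p.2} (fun v => ?_) (hconn p.1 p.2)
        simp only [Set.mem_setOf_eq, Fin.mk_zero, Fin.mk_one, Matrix.cons_val_zero, Matrix.cons_val_one, Matrix.head_cons]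
        by_cases hh : ℓ v p.1 = p.2 <;> simp [hh]
      · refine htrans _ {v | ¬ ℓ v p.1 = p.2} (fun v => ?_) hgp
        simp only [Set.mem_setOf_eq, Fin.mk_zero, Fin.mk_one, Matrix.cons_val_zero, Matrix.cons_val_one, Matrix.head_cons]
        by_cases hh : ℓ v p.1 = p.2 <;> simp [hh]
      · refine htrans _ {v | ℓ v q.1 = q.2} (fun v => ?_) (hconn q.1 q.2)
        simp only [Set.mem_setOf_eq, Fin.mk_zero, Fin.mk_one, Matrix.cons_val_zero, Matrix.cons_val_one, Matrix.head_cons]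
        by_cases hh : ℓ v q.1 = q.2 <;> simp [hh]
      · refine htrans _ {v | ¬ ℓ v q.1 = q.2} (fun v => ?_) hgq
        simp only [Set.mem_setOf_eq, Fin.mk_zero, Fin.mk_one, Matrix.cons_val_zero, Matrix.cons_val_one, Matrix.head_cons]
        by_cases hh : ℓ v q.1 = q.2 <;> simp [hh]
  · -- two good states per character
    intro f
    have hmemC : ∀ i : Fin 3, (T.induce {v | ¬ ℓ v f = i}).Preconnected →
        (f, i) ∈ Finset.univ.filter
          (fun p : F × Fin 3 => (T.induce {v | ¬ ℓ v p.1 = p.2}).Preconnected) :=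
      fun i hi => Finset.mem_filter.2 ⟨Finset.mem_univ _, hi⟩
    by_cases hem : ∃ m, ∀ v, ¬ ℓ v f = m
    · obtain ⟨m, hm⟩ := hem
      have hex : ∀ m : Fin 3, ∃ i j : Fin 3, i ≠ j ∧ i ≠ m ∧ j ≠ m := by decide
      obtain ⟨i, j, hij, him, hjm⟩ := hex m
      have key : ∀ (m i' j' u : Fin 3), i' ≠ j' → i' ≠ m → j' ≠ m → ¬ u = m →
          (¬ u = i' ↔ u = j') := by decide
      refine ⟨i, j, hij, hmemC i ?_, hmemC j ?_⟩
      · refine htrans _ {v | ℓ v f = j} (fun v => ?_) (hconn f j)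
        exact key m i j (ℓ v f) hij him hjm (hm v)
      · refine htrans _ {v | ℓ v f = i} (fun v => ?_) (hconn f i)
        have := key m j i (ℓ v f) (Ne.symm hij) hjm him (hm v)
        exact this
    · push_neg at hem
      -- every class is nonempty; outgoing edges exist
      have hout : ∀ m m' : Fin 3, m ≠ m' → ∃ u w, ℓ u f = m ∧ ¬ ℓ w f = m ∧ T.Adj u w := by
        intro m m' hmm
        obtain ⟨u0, hu0⟩ := hem m
        obtain ⟨w0, hw0⟩ := hem m'
        obtain ⟨q⟩ := htree.isConnected.preconnected u0 w0
        obtain ⟨u, w, hadj, hu, hw, -⟩ := aux_first_cross (S := {v | ℓ v f = m}) q hu0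
          (fun hh : ℓ w0 f = m => hmm (hw0 ▸ hh).symm)
        exact ⟨u, w, hu, hw, hadj⟩
      have htri : ∀ (i a b u : Fin 3), i ≠ a → i ≠ b → a ≠ b → ¬ u = i →
          (u = a ∨ u = b) := by decide
      have hgood : ∀ i a b : Fin 3, i ≠ a → i ≠ b → a ≠ b →
          (∃ u w, ℓ u f = a ∧ ℓ w f = b ∧ T.Adj u w) →
          (T.induce {v | ¬ ℓ v f = i}).Preconnected := by
        rintro i a b hia hib hab ⟨e1, e2, he1, he2, hadj⟩
        have he1' : e1 ∈ {v | ¬ ℓ v f = i} := fun hh => hia (he1 ▸ hh).symm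
        have he2' : e2 ∈ {v | ¬ ℓ v f = i} := fun hh => hib (he2 ▸ hh).symm
        have hsubA : ∀ w, ℓ w f = a → w ∈ {v | ¬ ℓ v f = i} :=
          fun w hw hh => hia (hw ▸ hh).symm
        have hsubB : ∀ w, ℓ w f = b → w ∈ {v | ¬ ℓ v f = i} :=
          fun w hw hh => hib (hw ▸ hh).symm
        have hreach : ∀ z (hz : z ∈ {v | ¬ ℓ v f = i}),
            (T.induce {v | ¬ ℓ v f = i}).Reachable ⟨z, hz⟩ ⟨e1, he1'⟩ := by
          intro z hz
          rcases htri i a b (ℓ z f) hia hib hab hz with hz' | hz'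
          · obtain ⟨q, hq⟩ := aux_walk_in (hconn f a) (hz' : z ∈ {v | ℓ v f = a}) he1
            exact aux_reach_of_walk q hz he1' (fun w hw => hsubA w (hq w hw))
          · obtain ⟨q, hq⟩ := aux_walk_in (hconn f b) (hz' : z ∈ {v | ℓ v f = b}) he2
            have h2 := aux_reach_of_walk q hz he2' (fun w hw => hsubB w (hq w hw))
            have hstep : (T.induce {v | ¬ ℓ v f = i}).Adj ⟨e2, he2'⟩ ⟨e1, he1'⟩ := by
              simpa using hadj.symm
            exact h2.trans hstep.reachable
        intro u v
        exact (hreach u.1 u.2).trans (hreach v.1 v.2).symm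
      obtain ⟨u0, w0, hu0, hw0, hadj0⟩ := hout 0 1 (by decide)
      obtain ⟨u2, w2, hu2, hw2, hadj2⟩ := hout 2 1 (by decide)
      rcases htri 0 1 2 (ℓ w0 f) (by decide) (by decide) (by decide) hw0 with hw0' | hw0' <;>
        rcases htri 2 0 1 (ℓ w2 f) (by decide) (by decide) (by decide) hw2 with hw2' | hw2'
      · -- edges 0-1 and 2-0
        refine ⟨1, 2, by decide, hmemC 1 ?_, hmemC 2 ?_⟩
        · exact hgood 1 2 0 (by decide) (by decide) (by decide) ⟨u2, w2, hu2, hw2', hadj2⟩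
        · exact hgood 2 0 1 (by decide) (by decide) (by decide) ⟨u0, w0, hu0, hw0', hadj0⟩
      · -- edges 0-1 and 2-1
        refine ⟨0, 2, by decide, hmemC 0 ?_, hmemC 2 ?_⟩
        · exact hgood 0 2 1 (by decide) (by decide) (by decide) ⟨u2, w2, hu2, hw2', hadj2⟩
        · exact hgood 2 0 1 (by decide) (by decide) (by decide) ⟨u0, w0, hu0, hw0', hadj0⟩
      · -- edges 0-2 and 2-0 : use an outgoing edge of class 1
        obtain ⟨u1, w1, hu1, hw1, hadj1⟩ := hout 1 0 (by decide)
        rcases htri 1 0 2 (ℓ w1 f) (by decide) (by decide) (by decide) hw1 with hw1' | hw1'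
        · -- edge 1-0
          refine ⟨1, 2, by decide, hmemC 1 ?_, hmemC 2 ?_⟩
          · exact hgood 1 0 2 (by decide) (by decide) (by decide) ⟨u0, w0, hu0, hw0', hadj0⟩
          · exact hgood 2 1 0 (by decide) (by decide) (by decide) ⟨u1, w1, hu1, hw1', hadj1⟩
        · -- edge 1-2
          refine ⟨0, 1, by decide, hmemC 0 ?_, hmemC 1 ?_⟩
          · exact hgood 0 1 2 (by decide) (by decide) (by decide) ⟨u1, w1, hu1, hw1', hadj1⟩
          · exact hgood 1 0 2 (by decide) (by decide) (by decide) ⟨u0, w0, hu0, hw0', hadj0⟩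
      · -- edges 0-2 and 2-1
        refine ⟨0, 1, by decide, hmemC 0 ?_, hmemC 1 ?_⟩
        · exact hgood 0 2 1 (by decide) (by decide) (by decide) ⟨u2, w2, hu2, hw2', hadj2⟩
        · exact hgood 1 0 2 (by decide) (by decide) (by decide) ⟨u0, w0, hu0, hw0', hadj0⟩

lemma aux_backward {X F : Type} [Fintype X] [Fintype F] (chars : F → X → Fin 3)
    (C : Finset (F × Fin 3))
    (hC1 : ∀ p ∈ C, ∀ q ∈ C, PairPP 2 (bin (chars p.1) p.2) (bin (chars q.1) q.2))
    (hC2 : ∀ f : F, ∃ i j : Fin 3, i ≠ j ∧ (f, i) ∈ C ∧ (f, j) ∈ C) :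
    PerfectPhylogeny 3 chars := by
  classical
  by_cases hX : Nonempty X
  case neg =>
    refine ⟨PUnit, inferInstance, ⊥, fun _ _ => 0, ?_, ?_, ?_⟩
    · constructor
      · have : Nonempty PUnit := ⟨PUnit.unit⟩
        exact ⟨fun u v => by cases u; cases v; exact Reachable.refl _⟩
      · rw [isAcyclic_iff_forall_adj_isBridge]
        intro u v h
        exact absurd h (by simp)
    · exact fun x => absurd ⟨x⟩ hX
    · intro f s u v
      have : u = v := Subtype.ext (Subsingleton.elim u.1 v.1)
      rw [this]
  case pos =>
  obtain ⟨x0⟩ := hX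
  choose ii jj hij hiC hjC using hC2
  have hthird : ∀ a b : Fin 3, a ≠ b →
      ∃ m, m ≠ a ∧ m ≠ b ∧ ∀ s, s ≠ a → s ≠ b → s = m := by decide
  choose kk hk1 hk2 hk3 using fun f => hthird (ii f) (jj f) (hij f)
  have hstC : ∀ f t, (f, cond t (jj f) (ii f)) ∈ C := by
    intro f t; cases t
    · exact hiC f
    · exact hjC f
  have hPP : ∀ g g' : F × Bool,
      PairPP 2 (bin (chars g.1) (cond g.2 (jj g.1) (ii g.1))) (bin (chars g'.1) (cond g'.2 (jj g'.1) (ii g'.1))) :=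
    fun g g' => hC1 _ (hstC g.1 g.2) _ (hstC g'.1 g'.2)
  set A : F × Bool → Finset X := fun g =>
    Finset.univ.filter (fun x => bin (chars g.1) (cond g.2 (jj g.1) (ii g.1)) x ≠ bin (chars g.1) (cond g.2 (jj g.1) (ii g.1)) x0)
    with hA
  have hAmem : ∀ g x, x ∈ A g ↔ bin (chars g.1) (cond g.2 (jj g.1) (ii g.1)) x ≠ bin (chars g.1) (cond g.2 (jj g.1) (ii g.1)) x0 := by
    intro g x; simp [hA]
  have hbinne : ∀ (c : X → Fin 3) (s : Fin 3) (x y : X),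
      (bin c s x ≠ bin c s y) ↔ ¬(c x = s ↔ c y = s) := by
    intro c s x y
    unfold bin
    by_cases h1 : c x = s <;> by_cases h2 : c y = s <;> simp [h1, h2]
  have hx0A : ∀ g, x0 ∉ A g := by
    intro g hg
    exact ((hAmem g x0).1 hg) rfl
  have hAmem' : ∀ f t x, x ∈ A (f, t) ↔ ¬(chars f x = cond t (jj f) (ii f) ↔ chars f x0 = cond t (jj f) (ii f)) := by
    intro f t x
    rw [hAmem]
    exact hbinne _ _ _ _
  have hlam : ∀ g g', A g ⊆ A g' ∨ A g' ⊆ A g ∨ ∀ x, x ∈ A g → x ∈ A g' → False := by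
    intro g g'
    by_contra hcon
    push_neg at hcon
    obtain ⟨h1, h2, x3, hx3, hx3'⟩ := hcon
    obtain ⟨x1, hx1, hx1'⟩ := Finset.not_subset.1 h1
    obtain ⟨x2, hx2, hx2'⟩ := Finset.not_subset.1 h2
    set a := bin (chars g.1) (cond g.2 (jj g.1) (ii g.1)) with ha
    set b := bin (chars g'.1) (cond g'.2 (jj g'.1) (ii g'.1)) with hb
    have htwo : ∀ u v w : Fin 2, u ≠ w → v ≠ w → u = v := by decide
    have hax1 : a x1 ≠ a x0 := (hAmem g x1).1 hx1
    have hbx1 : b x1 = b x0 := not_not.1 (fun h => hx1' ((hAmem g' x1).2 h))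
    have hax2 : a x2 = a x0 := not_not.1 (fun h => hx2' ((hAmem g x2).2 h))
    have hbx2 : b x2 ≠ b x0 := (hAmem g' x2).1 hx2
    have hax3 : a x3 ≠ a x0 := (hAmem g x3).1 hx3
    have hbx3 : b x3 ≠ b x0 := (hAmem g' x3).1 hx3'.1
    exact aux_four_gamete (hPP g g') (fun h => hax3 h.symm) (fun h => hbx3 h.symm)
      rfl rfl hax2 (htwo (b x2) (b x3) (b x0) hbx2 hbx3)
      (htwo (a x1) (a x3) (a x0) hax1 hax3) hbx1 rfl rfl
  obtain ⟨V, hFinV, T, σ, τ, htree, hτ, c1, c2, c3, c4, c5⟩ := aux_laminar x0 A hx0A hlam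
  obtain ⟨ℓ, hchar⟩ : ∃ ℓ : V → F → Fin 3, ∀ v f,
      (ℓ v f = ii f ↔ ¬(σ v (f, false) ↔ chars f x0 = ii f)) ∧
      (ℓ v f = jj f ↔ ((σ v (f, false) ↔ chars f x0 = ii f) ∧
        ¬(σ v (f, true) ↔ chars f x0 = jj f))) ∧
      (ℓ v f = kk f ↔ ((σ v (f, false) ↔ chars f x0 = ii f) ∧
        (σ v (f, true) ↔ chars f x0 = jj f))) := by
    refine ⟨fun v f => if ¬(σ v (f, false) ↔ chars f x0 = ii f) then ii f
      else if ¬(σ v (f, true) ↔ chars f x0 = jj f) then jj f else kk f, ?_⟩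
    intro v f
    dsimp only
    by_cases h1 : σ v (f, false) ↔ chars f x0 = ii f
    · rw [if_neg (not_not_intro h1)]
      by_cases h2 : σ v (f, true) ↔ chars f x0 = jj f
      · rw [if_neg (not_not_intro h2)]
        exact ⟨iff_of_false (fun e => hk1 f e) (not_not_intro h1),
          iff_of_false (fun e => hk2 f e) (fun hh => hh.2 h2),
          iff_of_true rfl ⟨h1, h2⟩⟩
      · rw [if_pos h2]
        exact ⟨iff_of_false (fun e => hij f e.symm) (not_not_intro h1),
          iff_of_true rfl ⟨h1, h2⟩,
          iff_of_false (fun e => hk2 f e.symm) (fun hh => h2 hh.2)⟩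
    · rw [if_pos h1]
      exact ⟨iff_of_true rfl h1, iff_of_false (fun e => hij f e) (fun hh => h1 hh.1),
        iff_of_false (fun e => hk1 f e.symm) (fun hh => h1 hh.1)⟩
  -- membership of A in terms of σ at taxa
  have hσ : ∀ x f t, σ (τ x) (f, t) ↔ ¬(chars f x = cond t (jj f) (ii f) ↔ chars f x0 = cond t (jj f) (ii f)) :=
    fun x f t => (hτ x (f, t)).trans (hAmem' f t x)
  refine ⟨V, hFinV, T, ℓ, htree, ?_, ?_⟩
  · -- taxa
    intro x
    refine ⟨τ x, fun f => ?_⟩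
    have h0 : σ (τ x) (f, false) ↔ ¬(chars f x = ii f ↔ chars f x0 = ii f) := hσ x f false
    have h1 : σ (τ x) (f, true) ↔ ¬(chars f x = jj f ↔ chars f x0 = jj f) := hσ x f true
    by_cases hcx : chars f x = ii f
    · rw [(hchar (τ x) f).1.2 ?_, hcx]
      rw [h0]
      by_cases hc0 : chars f x0 = ii f <;> simp [hcx, hc0]
    · by_cases hcy : chars f x = jj f
      · rw [(hchar (τ x) f).2.1.2 ?_, hcy]
        constructor
        · rw [h0]
          by_cases hc0 : chars f x0 = ii f <;> simp [hcx, hc0]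
        · rw [h1]
          by_cases hc0 : chars f x0 = jj f <;> simp [hcy, hc0]
      · rw [(hchar (τ x) f).2.2.2 ?_, (hk3 f _ hcx hcy)]
        constructor
        · rw [h0]
          by_cases hc0 : chars f x0 = ii f <;> simp [hcx, hc0]
        · rw [h1]
          by_cases hc0 : chars f x0 = jj f <;> simp [hcy, hc0]
  · -- connectivity
    intro f s
    have htrans : ∀ (S1 S2 : Set V), (∀ v, v ∈ S1 ↔ v ∈ S2) →
        (T.induce S2).Preconnected → (T.induce S1).Preconnected := by
      intro S1 S2 h hp
      rw [Set.ext h]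
      exact hp
    -- nestedness facts
    have hsub_ti : chars f x0 = ii f → A (f, true) ⊆ A (f, false) := by
      intro hc0 x hx
      have hx' : ¬(chars f x = jj f ↔ chars f x0 = jj f) := (hAmem' f true x).1 hx
      refine (hAmem' f false x).2 ?_
      have hc0j : ¬ chars f x0 = jj f := fun e => hij f (hc0.symm.trans e)
      have hcxj : chars f x = jj f := by tauto
      have hcxi : ¬ chars f x = ii f := fun e => hij f (e.symm.trans hcxj)
      tauto
    have hs3 : s = ii f ∨ s = jj f ∨ s = kk f := by
      by_cases e1 : s = ii f
      · exact Or.inl e1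
      by_cases e2 : s = jj f
      · exact Or.inr (Or.inl e2)
      · exact Or.inr (Or.inr (hk3 f s e1 e2))
    have hc3 : chars f x0 = ii f ∨ chars f x0 = jj f ∨ chars f x0 = kk f := by
      by_cases e1 : chars f x0 = ii f
      · exact Or.inl e1
      by_cases e2 : chars f x0 = jj f
      · exact Or.inr (Or.inl e2)
      · exact Or.inr (Or.inr (hk3 f _ e1 e2))
    have hij' : ¬ jj f = ii f := fun e => hij f e.symm
    have hki : ¬ kk f = ii f := hk1 f
    have hkj : ¬ kk f = jj f := hk2 f
    have hik : ¬ ii f = kk f := fun e => hk1 f e.symm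
    have hjk : ¬ jj f = kk f := fun e => hk2 f e.symm
    rcases hc3 with hc0 | hc0 | hc0
    · -- x0 in state ii f
      have hc0j : ¬ chars f x0 = jj f := fun e => hij f (hc0.symm.trans e)
      rcases hs3 with rfl | rfl | rfl
      · refine htrans _ _ (fun v => ?_) (c2 (f, false))
        simp only [Set.mem_setOf_eq, (hchar v f).1, hc0]
        tauto
      · refine htrans _ _ (fun v => ?_) (c5 (f, false) (f, true) (hsub_ti hc0))
        simp only [Set.mem_setOf_eq, (hchar v f).2.1, hc0]
        tauto
      · refine htrans _ _ (fun v => ?_) (c3 (f, false) (f, true))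
        simp only [Set.mem_setOf_eq, (hchar v f).2.2, hc0]
        tauto
    · -- x0 in state jj f
      have hc0i : ¬ chars f x0 = ii f := fun e => hij f (e.symm.trans hc0)
      rcases hs3 with rfl | rfl | rfl
      · refine htrans _ _ (fun v => ?_) (c1 (f, false))
        simp only [Set.mem_setOf_eq, (hchar v f).1, hc0]
        tauto
      · refine htrans _ _ (fun v => ?_) (c4 (f, false) (f, true))
        simp only [Set.mem_setOf_eq, (hchar v f).2.1, hc0]
        tauto
      · refine htrans _ _ (fun v => ?_) (c3 (f, true) (f, false))
        simp only [Set.mem_setOf_eq, (hchar v f).2.2, hc0]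
        tauto
    · -- x0 in state kk f
      have hc0i : ¬ chars f x0 = ii f := fun e => hk1 f (hc0.symm.trans e)
      have hc0j : ¬ chars f x0 = jj f := fun e => hk2 f (hc0.symm.trans e)
      rcases hs3 with rfl | rfl | rfl
      · refine htrans _ _ (fun v => ?_) (c1 (f, false))
        simp only [Set.mem_setOf_eq, (hchar v f).1, hc0]
        tauto
      · refine htrans _ _ (fun v => ?_) (c3 (f, true) (f, false))
        simp only [Set.mem_setOf_eq, (hchar v f).2.1, hc0]
        tauto
      · refine htrans _ _ (fun v => ?_) (c4 (f, false) (f, true))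
        simp only [Set.mem_setOf_eq, (hchar v f).2.2, hc0]
        tauto

/-- Dress–Steel: a finite family of 3-state characters has a perfect
phylogeny iff there is a set `C` of binarized characters (represented by pairs
`(f, i)` with `f` a character and `i` a state) that is pairwise compatible and
contains at least two of the three binarizations of each character. -/
theorem three_state_pp_iff_binarized_selection
    {X F : Type} [Fintype X] [Fintype F] (chars : F → X → Fin 3) :
    PerfectPhylogeny 3 chars ↔
      ∃ C : Finset (F × Fin 3),
        (∀ p ∈ C, ∀ q ∈ C, PairPP 2 (bin (chars p.1) p.2) (bin (chars q.1) q.2)) ∧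
        (∀ f : F, ∃ i j : Fin 3, i ≠ j ∧ (f, i) ∈ C ∧ (f, j) ∈ C) := by
  classical
  constructor
  · exact fun h => aux_forward chars h
  · rintro ⟨C, h1, h2⟩
    exact aux_backward chars C h1 h2
end

section
/- Let M be a pairwise compatible finite family of 3-state characters on a finite set of taxa X. If some character c of M has two distinct dependent states, then M has no perfect phylogeny. -/
/-! ### Auxiliary machinery -/

open SimpleGraph

section Aux

/-- Connectivity within a set, via walks staying in the set. -/
def ConnIn {V : Type} (T : SimpleGraph V) (S : Set V) : Prop :=
  ∀ x, x ∈ S → ∀ y, y ∈ S → ∃ w : T.Walk x y, ∀ z ∈ w.support, z ∈ S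

variable {V : Type}

lemma connIn_of_induce {T : SimpleGraph V} {S : Set V}
    (h : (T.induce S).Preconnected) : ConnIn T S := by
  intro x hx y hy
  obtain ⟨w⟩ := h ⟨x, hx⟩ ⟨y, hy⟩
  refine ⟨w.map (SimpleGraph.Embedding.induce S).toHom, ?_⟩
  intro z hz
  have hz2 : z ∈ (w.map (SimpleGraph.Embedding.induce S).toHom).support := hz
  rw [SimpleGraph.Walk.support_map] at hz2
  obtain ⟨⟨z', hz'⟩, -, rfl⟩ := List.mem_map.mp hz2
  exact hz'

lemma reachable_induce {T : SimpleGraph V} {S : Set V} :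
    ∀ {x y : V} (w : T.Walk x y) (_ : ∀ z ∈ w.support, z ∈ S)
      (hx : x ∈ S) (hy : y ∈ S), (T.induce S).Reachable ⟨x, hx⟩ ⟨y, hy⟩ := by
  intro x y w
  induction w with
  | nil => intro _ hx hy; exact Reachable.refl _
  | @cons a b y hadj p ih =>
    intro hsup hx hy
    have hb : b ∈ S := hsup b (by simp [SimpleGraph.Walk.support_cons, p.start_mem_support])
    have h1 : (T.induce S).Adj ⟨a, hx⟩ ⟨b, hb⟩ := hadj
    exact (h1.reachable).trans
      (ih (fun z hz => hsup z (by simp [SimpleGraph.Walk.support_cons, hz])) hb hy)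

lemma induce_preconnected_of_connIn {T : SimpleGraph V} {S : Set V}
    (hS : ConnIn T S) : (T.induce S).Preconnected := by
  rintro ⟨x, hx⟩ ⟨y, hy⟩
  obtain ⟨w, hw⟩ := hS x hx y hy
  exact reachable_induce w hw hx hy

lemma exists_crossing {T : SimpleGraph V} {A : Set V} :
    ∀ {x y : V} (w : T.Walk x y), x ∈ A → y ∉ A →
      ∃ a b, T.Adj a b ∧ a ∈ A ∧ b ∉ A ∧ a ∈ w.support ∧ b ∈ w.support := by
  intro x y w
  induction w with
  | nil => intro hx hy; exact absurd hx hy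
  | @cons a b y hadj p ih =>
    intro hx hy
    by_cases hb : b ∈ A
    · obtain ⟨a', b', h1, h2, h3, h4, h5⟩ := ih hb hy
      exact ⟨a', b', h1, h2, h3, by simp [SimpleGraph.Walk.support_cons, h4],
        by simp [SimpleGraph.Walk.support_cons, h5]⟩
    · exact ⟨a, b, hadj, hx, hb, (SimpleGraph.Walk.cons hadj p).start_mem_support,
        by simp [SimpleGraph.Walk.support_cons, p.start_mem_support]⟩

lemma crossing_unique {T : SimpleGraph V} (hT : T.IsTree) {A : Set V}
    (hA : ConnIn T A) (hAc : ConnIn T Aᶜ)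
    {a1 b1 a2 b2 : V} (e1 : T.Adj a1 b1) (e2 : T.Adj a2 b2)
    (ha1 : a1 ∈ A) (hb1 : b1 ∉ A) (ha2 : a2 ∈ A) (hb2 : b2 ∉ A) :
    a1 = a2 ∧ b1 = b2 := by
  classical
  obtain ⟨wa, hwa⟩ := hA a2 ha2 a1 ha1
  obtain ⟨wb, hwb⟩ := hAc b1 hb1 b2 hb2
  set W : T.Walk a2 b2 := wa.append (SimpleGraph.Walk.cons e1 wb) with hW
  have hsingle : ((SimpleGraph.Path.singleton e2 : T.Path a2 b2) : T.Walk a2 b2) = W.bypass :=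
    (hT.existsUnique_path a2 b2).unique (SimpleGraph.Path.singleton e2).2 W.bypass_isPath
  have hmem : s(a2, b2) ∈ W.bypass.edges := by
    rw [← hsingle]
    simp [SimpleGraph.Path.singleton]
  have hWmem := W.edges_bypass_subset hmem
  rw [hW, SimpleGraph.Walk.edges_append, SimpleGraph.Walk.edges_cons] at hWmem
  rcases List.mem_append.mp hWmem with h | h
  · exact absurd (hwa b2 (wa.snd_mem_support_of_mem_edges h)) hb2
  · rcases List.mem_cons.mp h with h | h
    · rw [Sym2.eq_iff] at h
      rcases h with ⟨h1, h2⟩ | ⟨h1, h2⟩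
      · exact ⟨h1.symm, h2.symm⟩
      · exact absurd (h1 ▸ ha2) hb1
    · exact absurd ha2 (hwb a2 (wb.fst_mem_support_of_mem_edges h))

lemma no_mid_split {T : SimpleGraph V} (hT : T.IsTree)
    {A Dj Dk : Set V}
    (hA : ConnIn T A) (hW : ConnIn T Aᶜ)
    (hDj : ConnIn T Dj) (hDk : ConnIn T Dk)
    (hdisj : ∀ v, v ∈ Dj → v ∈ Dk → False)
    (p1 : ∃ v, v ∈ A ∧ v ∈ Dj) (p2 : ∃ v, v ∉ A ∧ v ∈ Dj)
    (q1 : ∃ v, v ∈ A ∧ v ∈ Dk) (q2 : ∃ v, v ∉ A ∧ v ∈ Dk) : False := by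
  obtain ⟨x1, hx1, hx1D⟩ := p1
  obtain ⟨x2, hx2, hx2D⟩ := p2
  obtain ⟨w, hw⟩ := hDj x1 hx1D x2 hx2D
  obtain ⟨a1, b1, e1, ha1, hb1, ha1s, hb1s⟩ := exists_crossing w hx1 hx2
  obtain ⟨y1, hy1, hy1D⟩ := q1
  obtain ⟨y2, hy2, hy2D⟩ := q2
  obtain ⟨w', hw'⟩ := hDk y1 hy1D y2 hy2D
  obtain ⟨a2, b2, e2, ha2, hb2, ha2s, hb2s⟩ := exists_crossing w' hy1 hy2
  obtain ⟨h1, -⟩ := crossing_unique hT hA hW e1 e2 ha1 hb1 ha2 hb2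
  exact hdisj a1 (hw a1 ha1s) (h1 ▸ hw' a2 ha2s)

lemma connIn_subsingleton {T : SimpleGraph V} {S : Set V}
    (h : ∀ x ∈ S, ∀ y ∈ S, x = y) : ConnIn T S := by
  intro x hx y hy
  obtain rfl := h x hx y hy
  exact ⟨SimpleGraph.Walk.nil, by simpa using hx⟩

lemma connIn_pair {T : SimpleGraph V} {u v : V} (h : T.Adj u v) :
    ConnIn T {u, v} := by
  intro x hx y hy
  simp only [Set.mem_insert_iff, Set.mem_singleton_iff] at hx hy
  rcases hx with rfl | rfl <;> rcases hy with rfl | rfl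
  · exact ⟨SimpleGraph.Walk.nil, by simp⟩
  · refine ⟨SimpleGraph.Walk.cons h SimpleGraph.Walk.nil, ?_⟩
    intro z hz
    simp only [SimpleGraph.Walk.support_cons, SimpleGraph.Walk.support_nil,
      List.mem_cons, List.mem_singleton] at hz
    rcases hz with rfl | rfl | h' <;> simp_all
  · refine ⟨SimpleGraph.Walk.cons h.symm SimpleGraph.Walk.nil, ?_⟩
    intro z hz
    simp only [SimpleGraph.Walk.support_cons, SimpleGraph.Walk.support_nil,
      List.mem_cons, List.mem_singleton] at hz
    rcases hz with rfl | rfl | h' <;> simp_all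
  · exact ⟨SimpleGraph.Walk.nil, by simp⟩

lemma connIn_compl_of_edge {T : SimpleGraph V} {f : V → Fin 3} {i : Fin 3}
    (hcls : ∀ s : Fin 3, ConnIn T {v | f v = s})
    {u w : V} (adj : T.Adj u w) (hu : f u ≠ i) (hw : f w ≠ i) (hne : f u ≠ f w) :
    ConnIn T {v | f v ≠ i} := by
  have hcover : ∀ q : Fin 3, q ≠ i → q = f u ∨ q = f w := by
    intro q hq
    revert hu hw hne hq
    generalize f u = A
    generalize f w = B
    revert i A B q
    decide
  have hcls' : ∀ (s : Fin 3) (x y : V), f x = s → f y = s →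
      ∃ wk : T.Walk x y, ∀ z ∈ wk.support, f z = s := by
    intro s x y hx hy
    obtain ⟨wk, hwk⟩ := hcls s x hx y hy
    exact ⟨wk, fun z hz => hwk z hz⟩
  have hmix : ∀ (x y : V), f x = f u → f y = f w →
      ∃ wk : T.Walk x y, ∀ z ∈ wk.support, f z ≠ i := by
    intro x y hxu hyw
    obtain ⟨w1, hw1⟩ := hcls' (f u) x u hxu rfl
    obtain ⟨w2, hw2⟩ := hcls' (f w) w y rfl hyw
    refine ⟨w1.append (SimpleGraph.Walk.cons adj w2), ?_⟩
    intro z hz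
    rw [SimpleGraph.Walk.mem_support_append_iff] at hz
    rcases hz with hz | hz
    · rw [hw1 z hz]; exact hu
    · rw [SimpleGraph.Walk.support_cons] at hz
      rcases List.mem_cons.mp hz with rfl | hz
      · exact hu
      · rw [hw2 z hz]; exact hw
  intro x hx y hy
  simp only [Set.mem_setOf_eq] at hx hy
  rcases hcover (f x) hx with hxu | hxw <;> rcases hcover (f y) hy with hyu | hyw
  · obtain ⟨wk, h⟩ := hcls' (f u) x y hxu hyu
    exact ⟨wk, fun z hz => by simp only [Set.mem_setOf_eq]; rw [h z hz]; exact hu⟩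
  · obtain ⟨wk, h⟩ := hmix x y hxu hyw
    exact ⟨wk, fun z hz => h z hz⟩
  · obtain ⟨wk, h⟩ := hmix y x hyu hxw
    refine ⟨wk.reverse, fun z hz => ?_⟩
    rw [SimpleGraph.Walk.support_reverse, List.mem_reverse] at hz
    exact h z hz
  · obtain ⟨wk, h⟩ := hcls' (f w) x y hxw hyw
    exact ⟨wk, fun z hz => by simp only [Set.mem_setOf_eq]; rw [h z hz]; exact hw⟩

/-- The path graph on three vertices `0 - 1 - 2`, as an explicit simple graph. -/
def P3 : SimpleGraph (Fin 3) where
  Adj u v := (u = 0 ∧ v = 1) ∨ (u = 1 ∧ v = 0) ∨ (u = 1 ∧ v = 2) ∨ (u = 2 ∧ v = 1)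
  symm := by constructor; intro u v h; revert h; revert u v; decide
  loopless := by constructor; intro u h; revert h; revert u; decide

instance : DecidableRel P3.Adj := fun u v => by
  change Decidable ((u = 0 ∧ v = 1) ∨ (u = 1 ∧ v = 0) ∨ (u = 1 ∧ v = 2) ∨ (u = 2 ∧ v = 1))
  infer_instance

lemma P3_isTree : P3.IsTree := by
  refine ⟨⟨by decide⟩, ?_⟩
  intro v cyc hc
  have h3 := hc.three_le_length
  have hle := hc.isTrail.length_le_card_edgeFinset
  have hsub : P3.edgeFinset ⊆ {s(0, 1), s(1, 2)} := by decide
  have h2 : P3.edgeFinset.card ≤ 2 :=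
    le_trans (Finset.card_le_card hsub) (by decide)
  omega

lemma fin2_ne {q s : Fin 2} (h : q ≠ s) : q = s + 1 := by revert h; revert q s; decide

lemma fin2_sne (s : Fin 2) : s + 1 ≠ s := by revert s; decide

lemma pairPP_of_missing {X : Type} [Fintype X] (a b : X → Fin 2) (s t : Fin 2)
    (h : ∀ x, ¬(a x = s ∧ b x = t)) : PairPP 2 a b := by
  unfold PairPP PerfectPhylogeny
  refine ⟨Fin 3, inferInstance, P3,
    fun v => ![if v = 2 then s else s + 1, if v = 0 then t else t + 1],
    P3_isTree, ?_, ?_⟩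
  · intro x
    by_cases hax : a x = s
    · have hbx : b x = t + 1 := fin2_ne (fun hb => h x ⟨hax, hb⟩)
      exact ⟨2, by intro f; fin_cases f <;> simp [hax, hbx]⟩
    · have hax' : a x = s + 1 := fin2_ne hax
      by_cases hbx : b x = t
      · exact ⟨0, by intro f; fin_cases f <;> simp [hax', hbx]⟩
      · have hbx' : b x = t + 1 := fin2_ne hbx
        exact ⟨1, by intro f; fin_cases f <;> simp [hax', hbx']⟩
  · intro f q
    fin_cases f
    · show (P3.induce
        {v : Fin 3 | ![if v = 2 then s else s + 1, if v = 0 then t else t + 1] 0 = q}).Preconnected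
      rcases eq_or_ne q s with rfl | hq
      · have hS : {v : Fin 3 | ![if v = 2 then q else q + 1, if v = 0 then t else t + 1] 0 = q}
            = {(2 : Fin 3)} := by
          ext v; fin_cases v <;> simp [fin2_sne q, Ne.symm (fin2_sne q)]
        rw [hS]
        exact induce_preconnected_of_connIn (connIn_subsingleton (by simp))
      · have hq' : q = s + 1 := fin2_ne hq
        subst hq'
        have hS : {v : Fin 3 | ![if v = 2 then s else s + 1, if v = 0 then t else t + 1] 0 = s + 1}
            = {(0 : Fin 3), 1} := by
          ext v; fin_cases v <;> simp [fin2_sne s, Ne.symm (fin2_sne s)]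
        rw [hS]
        exact induce_preconnected_of_connIn (connIn_pair (Or.inl ⟨rfl, rfl⟩))
    · show (P3.induce
        {v : Fin 3 | ![if v = 2 then s else s + 1, if v = 0 then t else t + 1] 1 = q}).Preconnected
      rcases eq_or_ne q t with rfl | hq
      · have hS : {v : Fin 3 | ![if v = 2 then s else s + 1, if v = 0 then q else q + 1] 1 = q}
            = {(0 : Fin 3)} := by
          ext v; fin_cases v <;> simp [fin2_sne q, Ne.symm (fin2_sne q)]
        rw [hS]
        exact induce_preconnected_of_connIn (connIn_subsingleton (by simp))
      · have hq' : q = t + 1 := fin2_ne hq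
        subst hq'
        have hS : {v : Fin 3 | ![if v = 2 then s else s + 1, if v = 0 then t else t + 1] 1 = t + 1}
            = {(1 : Fin 3), 2} := by
          ext v; fin_cases v <;> simp [fin2_sne t, Ne.symm (fin2_sne t)]
        rw [hS]
        exact induce_preconnected_of_connIn (connIn_pair (Or.inr (Or.inr (Or.inl ⟨rfl, rfl⟩))))

lemma all_gametes {X : Type} [Fintype X] {a b : X → Fin 2} (h : ¬ PairPP 2 a b)
    (s t : Fin 2) : ∃ x, a x = s ∧ b x = t := by
  by_contra hc
  push_neg at hc
  exact h (pairPP_of_missing a b s t (fun x hx => hc x hx.1 hx.2))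

lemma bin_eq_zero {X : Type} {c : X → Fin 3} {i : Fin 3} {x : X} :
    bin c i x = 0 ↔ c x = i := by
  unfold bin; split <;> simp_all

lemma bin_eq_one {X : Type} {c : X → Fin 3} {i : Fin 3} {x : X} :
    bin c i x = 1 ↔ c x ≠ i := by
  unfold bin; split <;> simp_all

/-- Key structural lemma: if state `i` of `c` is dependent, then in any perfect
phylogeny of the family, both other classes of `c` are nonempty and there is
no edge between two distinct non-`i` classes of `c`. -/
lemma dependent_structure {X F : Type} [Fintype X] [Fintype F] {chars : F → X → Fin 3}
    {c : F} {i : Fin 3} (hi : DependentState chars c i)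
    {V : Type} {T : SimpleGraph V} {ℓ : V → F → Fin 3} (hT : T.IsTree)
    (hreal : ∀ x : X, ∃ v : V, ∀ f : F, ℓ v f = chars f x)
    (hconn : ∀ (f : F) (s : Fin 3), (T.induce {v : V | ℓ v f = s}).Preconnected) :
    (∀ s, s ≠ i → ∃ v, ℓ v c = s) ∧
      (∀ u w, T.Adj u w → ℓ u c ≠ i → ℓ w c ≠ i → ℓ u c = ℓ w c) := by
  obtain ⟨d, j', k', hjk, hpj, hpk⟩ := hi
  have gam : ∀ st : Fin 3, ¬ PairPP 2 (bin (chars c) i) (bin (chars d) st) →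
      (∃ v, ℓ v c = i ∧ ℓ v d = st) ∧ (∃ v, ℓ v c ≠ i ∧ ℓ v d = st) := by
    intro st hst
    obtain ⟨x1, hx1⟩ := all_gametes hst 0 0
    obtain ⟨x2, hx2⟩ := all_gametes hst 1 0
    obtain ⟨v1, hv1⟩ := hreal x1
    obtain ⟨v2, hv2⟩ := hreal x2
    refine ⟨⟨v1, ?_, ?_⟩, ⟨v2, ?_, ?_⟩⟩
    · rw [hv1 c]; exact bin_eq_zero.mp hx1.1
    · rw [hv1 d]; exact bin_eq_zero.mp hx1.2
    · rw [hv2 c]; exact bin_eq_one.mp hx2.1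
    · rw [hv2 d]; exact bin_eq_zero.mp hx2.2
  obtain ⟨pj1, pj2⟩ := gam j' hpj
  obtain ⟨pk1, pk2⟩ := gam k' hpk
  have hA : ConnIn T {v | ℓ v c = i} := connIn_of_induce (hconn c i)
  have hDj : ConnIn T {v | ℓ v d = j'} := connIn_of_induce (hconn d j')
  have hDk : ConnIn T {v | ℓ v d = k'} := connIn_of_induce (hconn d k')
  have hdisj : ∀ v : V, v ∈ {v | ℓ v d = j'} → v ∈ {v | ℓ v d = k'} → False := by
    intro v h1 h2
    have h1' : ℓ v d = j' := h1
    have h2' : ℓ v d = k' := h2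
    exact hjk (h1'.symm.trans h2')
  constructor
  · intro s hs
    by_contra hemp
    push_neg at hemp
    have hcompl : ConnIn T {v | ℓ v c = i}ᶜ := by
      intro x hx y hy
      have hx' : ℓ x c ≠ i := hx
      have hy' : ℓ y c ≠ i := hy
      have hfact : ∀ q r sv iv : Fin 3, q ≠ iv → q ≠ sv → r ≠ iv → r ≠ sv →
          sv ≠ iv → q = r := by decide
      have hxy : ℓ x c = ℓ y c :=
        hfact (ℓ x c) (ℓ y c) s i hx' (hemp x) hy' (hemp y) hs
      obtain ⟨wk, hwk⟩ := connIn_of_induce (hconn c (ℓ x c)) x rfl y hxy.symm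
      refine ⟨wk, fun z hz hzi => hx' ?_⟩
      have : ℓ z c = ℓ x c := hwk z hz
      rw [← this]; exact hzi
    exact absurd (no_mid_split hT hA hcompl hDj hDk hdisj pj1 pj2 pk1 pk2) not_false
  · intro u w adj hu hw
    by_contra hne
    have hcompl : ConnIn T {v | ℓ v c = i}ᶜ := by
      have := connIn_compl_of_edge (f := fun v => ℓ v c) (i := i)
        (fun s => connIn_of_induce (hconn c s)) adj hu hw hne
      exact this
    exact no_mid_split hT hA hcompl hDj hDk hdisj pj1 pj2 pk1 pk2

end Aux

/-- a pairwise compatible family with a character having two distinct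
dependent states has no perfect phylogeny. -/
theorem two_dependent_states_no_pp
    {X F : Type} [Fintype X] [Fintype F] (chars : F → X → Fin 3)
    (hpc : PairwiseCompatible 3 chars) (c : F) (i j : Fin 3) (hij : i ≠ j)
    (hi : DependentState chars c i) (hj : DependentState chars c j) :
    ¬ PerfectPhylogeny 3 chars := by
  rintro ⟨V, _, T, ℓ, hT, hreal, hconn⟩
  obtain ⟨hne_i, hedge_i⟩ := dependent_structure hi hT hreal hconn
  obtain ⟨hne_j, hedge_j⟩ := dependent_structure hj hT hreal hconn
  obtain ⟨m, hmi, hmj⟩ : ∃ m : Fin 3, m ≠ i ∧ m ≠ j := by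
    have : ∀ i' j' : Fin 3, i' ≠ j' → ∃ m, m ≠ i' ∧ m ≠ j' := by decide
    exact this i j hij
  obtain ⟨vm, hvm⟩ := hne_i m hmi
  obtain ⟨vj, hvj⟩ := hne_i j (Ne.symm hij)
  obtain ⟨w⟩ := hT.isConnected.preconnected vm vj
  obtain ⟨a, b, adj, ha, hb, -, -⟩ := exists_crossing (A := {v | ℓ v c = m}) w hvm
    (by simp only [Set.mem_setOf_eq, hvj]; exact Ne.symm hmj)
  have ham : ℓ a c = m := ha
  have hbm : ℓ b c ≠ m := hb
  by_cases hbi : ℓ b c = i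
  · have h1 : ℓ a c = ℓ b c :=
      hedge_j a b adj (by rw [ham]; exact hmj) (by rw [hbi]; exact hij)
    rw [ham, hbi] at h1
    exact hmi h1
  · have h1 : ℓ a c = ℓ b c := hedge_i a b adj (by rw [ham]; exact hmi) hbi
    rw [ham] at h1
    exact hbm h1.symm
end

section
/- Let c and d be 3-state characters on a finite set of taxa X such that the pair {c, d} has a perfect phylogeny, and let i be a state of c. If there is a path p1–p2–p3–p4–p5 of length four (four edges and five pairwise distinct vertices) in the partition intersection graph of c and d with middle vertex p3 = (c, i), then there exist two distinct states j, k of d such that the pair of 2-state characters {c(i), d(j)} has no perfect phylogeny and the pair {c(i), d(k)} has no perfect phylogeny. -/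
open SimpleGraph in
lemma walk_in_set' {V : Type} (T : SimpleGraph V) (S : Set V)
    (h : (T.induce S).Preconnected) {x y : V} (hx : x ∈ S) (hy : y ∈ S) :
    ∃ w : T.Walk x y, ∀ z ∈ w.support, z ∈ S := by
  obtain ⟨w⟩ := h ⟨x, hx⟩ ⟨y, hy⟩
  refine ⟨w.map (SimpleGraph.Embedding.induce S).toHom, ?_⟩
  intro z hz
  replace hz : z ∈ (w.map (SimpleGraph.Embedding.induce S).toHom).support := hz
  rw [SimpleGraph.Walk.support_map] at hz
  obtain ⟨u, hu, rfl⟩ := List.mem_map.mp hz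
  exact u.2

open SimpleGraph in
lemma unique_cross' {V : Type} {T : SimpleGraph V} (hT : T.IsAcyclic) (S : Set V)
    (hS : (T.induce S).Preconnected) (hS' : (T.induce Sᶜ).Preconnected)
    {x y u v : V} (hxy : T.Adj x y) (huv : T.Adj u v)
    (hx : x ∈ S) (hy : y ∉ S) (hu : u ∈ S) (hv : v ∉ S) : x = u ∧ y = v := by
  have key : s(x, y) = s(u, v) := by
    by_contra hne
    have hbridge := (isAcyclic_iff_forall_edge_isBridge.mp hT)
      (show s(x, y) ∈ T.edgeSet from hxy)
    rw [isBridge_iff] at hbridge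
    apply hbridge
    rw [reachable_delete_edges_iff_exists_walk]
    obtain ⟨w1, hw1⟩ := walk_in_set' T S hS hx hu
    obtain ⟨w2, hw2⟩ := walk_in_set' T Sᶜ hS' (show v ∈ Sᶜ from hv) (show y ∈ Sᶜ from hy)
    refine ⟨w1.append (huv.toWalk.append w2), ?_⟩
    intro hmem
    rw [SimpleGraph.Walk.edges_append, List.mem_append] at hmem
    rcases hmem with hmem | hmem
    · exact hy (hw1 y (SimpleGraph.Walk.snd_mem_support_of_mem_edges w1 hmem))
    · rw [SimpleGraph.Walk.edges_append, List.mem_append] at hmem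
      rcases hmem with hmem | hmem
      · simp only [SimpleGraph.Walk.edges_cons, SimpleGraph.Walk.edges_nil,
          List.mem_singleton] at hmem
        exact hne hmem
      · exact (hw2 x (SimpleGraph.Walk.fst_mem_support_of_mem_edges w2 hmem)) hx
  rw [Sym2.eq_iff] at key
  rcases key with ⟨rfl, rfl⟩ | ⟨rfl, rfl⟩
  · exact ⟨rfl, rfl⟩
  · exact absurd hx hv

lemma fourGamete {X : Type} [Fintype X] (a b : X → Fin 2)
    (h00 : ∃ x, a x = 0 ∧ b x = 0) (h01 : ∃ x, a x = 0 ∧ b x = 1)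
    (h10 : ∃ x, a x = 1 ∧ b x = 0) (h11 : ∃ x, a x = 1 ∧ b x = 1) :
    ¬ PairPP 2 a b := by
  rintro ⟨V, _, T, ℓ, hT, hocc, hconn⟩
  obtain ⟨x00, hx00a, hx00b⟩ := h00
  obtain ⟨x01, hx01a, hx01b⟩ := h01
  obtain ⟨x10, hx10a, hx10b⟩ := h10
  obtain ⟨x11, hx11a, hx11b⟩ := h11
  obtain ⟨v00, hv00⟩ := hocc x00
  obtain ⟨v01, hv01⟩ := hocc x01
  obtain ⟨v10, hv10⟩ := hocc x10
  obtain ⟨v11, hv11⟩ := hocc x11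
  have hv00a : ℓ v00 0 = 0 := by rw [hv00 0]; simpa using hx00a
  have hv00b : ℓ v00 1 = 0 := by rw [hv00 1]; simpa using hx00b
  have hv01a : ℓ v01 0 = 0 := by rw [hv01 0]; simpa using hx01a
  have hv01b : ℓ v01 1 = 1 := by rw [hv01 1]; simpa using hx01b
  have hv10a : ℓ v10 0 = 1 := by rw [hv10 0]; simpa using hx10a
  have hv10b : ℓ v10 1 = 0 := by rw [hv10 1]; simpa using hx10b
  have hv11a : ℓ v11 0 = 1 := by rw [hv11 0]; simpa using hx11a
  have hv11b : ℓ v11 1 = 1 := by rw [hv11 1]; simpa using hx11b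
  have fin2 : ∀ s : Fin 2, s ≠ 0 → s = 1 := by decide
  set S : Set V := {w | ℓ w 1 = 0} with hSdef
  have hScompl : (T.induce Sᶜ).Preconnected := by
    have hcompl : {w : V | ℓ w 1 = 1} = Sᶜ := by
      ext w
      simp only [Set.mem_setOf_eq, Set.mem_compl_iff, hSdef]
      constructor
      · intro h1; rw [h1]; exact one_ne_zero
      · exact fin2 _
    have := hconn 1 1
    rwa [hcompl] at this
  obtain ⟨w0, hw0⟩ := walk_in_set' T {w | ℓ w 0 = 0} (hconn 0 0)
    (show v00 ∈ _ from hv00a) (show v01 ∈ _ from hv01a)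
  obtain ⟨w1, hw1⟩ := walk_in_set' T {w | ℓ w 0 = 1} (hconn 0 1)
    (show v10 ∈ _ from hv10a) (show v11 ∈ _ from hv11a)
  obtain ⟨d0, hd0, hd0f, hd0s⟩ := w0.exists_boundary_dart S
    (show v00 ∈ S from hv00b) (show v01 ∉ S by simp [hSdef, hv01b])
  obtain ⟨d1, hd1, hd1f, hd1s⟩ := w1.exists_boundary_dart S
    (show v10 ∈ S from hv10b) (show v11 ∉ S by simp [hSdef, hv11b])
  have hkey := unique_cross' hT.2 S (hconn 1 0) hScompl d0.adj d1.adj hd0f hd0s hd1f hd1s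
  have h0 : ℓ d0.fst 0 = 0 := hw0 _ (SimpleGraph.Walk.dart_fst_mem_support_of_mem_darts w0 hd0)
  have h1 : ℓ d1.fst 0 = 1 := hw1 _ (SimpleGraph.Walk.dart_fst_mem_support_of_mem_darts w1 hd1)
  rw [hkey.1, h1] at h0
  exact absurd h0 (by decide)

/-- if `{c, d}` is compatible and the partition intersection graph of
`c` and `d` has a path of length four with middle vertex `(c, i)` (encoded
`(false, i)`), then `c(i)` is incompatible with two distinct binarizations of `d`. -/
theorem path_middle_gives_two_incompatibilities
    {X : Type} [Fintype X] (c d : X → Fin 3) (h : PairPP 3 c d) (i : Fin 3)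
    (hp : HasPathLen4Mid (pig c d) (false, i)) :
    ∃ j k : Fin 3, j ≠ k ∧
      ¬ PairPP 2 (bin c i) (bin d j) ∧ ¬ PairPP 2 (bin c i) (bin d k) := by
  obtain ⟨p, hinj, hadj, hmid⟩ := hp
  have h01 : (pig c d).Adj (p 0) (p 1) := hadj 0
  have h12 : (pig c d).Adj (p 1) (p 2) := hadj 1
  have h23 : (pig c d).Adj (p 2) (p 3) := hadj 2
  have h34 : (pig c d).Adj (p 3) (p 4) := hadj 3
  rw [hmid] at h12 h23
  obtain ⟨hp1t, x2, hx2c, hx2d⟩ : (p 1).1 = true ∧ ∃ x, c x = i ∧ d x = (p 1).2 := by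
    rcases h12 with ⟨-, habs, -⟩ | ⟨h1, -, x, hxc, hxd⟩
    · simp at habs
    · exact ⟨h1, x, hxc, hxd⟩
  obtain ⟨hp3t, x3, hx3c, hx3d⟩ : (p 3).1 = true ∧ ∃ x, c x = i ∧ d x = (p 3).2 := by
    rcases h23 with ⟨-, h2, x, hxc, hxd⟩ | ⟨habs, -, -⟩
    · exact ⟨h2, x, hxc, hxd⟩
    · simp at habs
  obtain ⟨hp0f, x1, hx1c, hx1d⟩ : (p 0).1 = false ∧ ∃ x, c x = (p 0).2 ∧ d x = (p 1).2 := by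
    rcases h01 with ⟨h1, -, x, hxc, hxd⟩ | ⟨-, habs, -⟩
    · exact ⟨h1, x, hxc, hxd⟩
    · rw [habs] at hp1t; simp at hp1t
  obtain ⟨hp4f, x4, hx4c, hx4d⟩ : (p 4).1 = false ∧ ∃ x, c x = (p 4).2 ∧ d x = (p 3).2 := by
    rcases h34 with ⟨habs, -, -⟩ | ⟨-, h2, x, hxc, hxd⟩
    · rw [habs] at hp3t; simp at hp3t
    · exact ⟨h2, x, hxc, hxd⟩
  have hjk : (p 1).2 ≠ (p 3).2 := by
    intro hh
    have : p 1 = p 3 := Prod.ext_iff.mpr ⟨by rw [hp1t, hp3t], hh⟩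
    exact absurd (hinj this) (by decide)
  have ha2 : (p 0).2 ≠ i := by
    intro hh
    have : p 0 = p 2 := by rw [hmid]; exact Prod.ext_iff.mpr ⟨by rw [hp0f], hh⟩
    exact absurd (hinj this) (by decide)
  have hb2 : (p 4).2 ≠ i := by
    intro hh
    have : p 4 = p 2 := by rw [hmid]; exact Prod.ext_iff.mpr ⟨by rw [hp4f], hh⟩
    exact absurd (hinj this) (by decide)
  refine ⟨(p 1).2, (p 3).2, hjk, ?_, ?_⟩
  · exact fourGamete _ _
      ⟨x2, by simp [bin, hx2c], by simp [bin, hx2d]⟩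
      ⟨x3, by simp [bin, hx3c], by simp [bin, hx3d, hjk.symm]⟩
      ⟨x1, by simp [bin, hx1c, ha2], by simp [bin, hx1d]⟩
      ⟨x4, by simp [bin, hx4c, hb2], by simp [bin, hx4d, hjk.symm]⟩
  · exact fourGamete _ _
      ⟨x3, by simp [bin, hx3c], by simp [bin, hx3d]⟩
      ⟨x2, by simp [bin, hx2c], by simp [bin, hx2d, hjk]⟩
      ⟨x4, by simp [bin, hx4c, hb2], by simp [bin, hx4d]⟩
      ⟨x1, by simp [bin, hx1c, ha2], by simp [bin, hx1d, hjk]⟩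
end
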